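/- arXiv:2002.00859 — 3 statements merged into one kernel-verified Lean document; each statement's English description precedes it below -/
import Mathlib

section
/- Let p > 1 and μ ∈ W_p([0,1]). Then the p-Wasserstein distance from μ to the set Δ([0,1]) of Dirac masses satisfies dist_{W_p}(μ, Δ([0,1])) ≤ 1/2, and equality holds if and only if μ = (1/2)δ₀ + (1/2)δ₁. -/
open MeasureTheory Set

noncomputable section

/-- Cumulative distribution function of a measure on `[0,1]`: `F_μ(x) = μ([0,x])`. -/
def cdfI (μ : Measure ℝ) (x : ℝ) : ℝ := (μ (Set.Icc 0 x)).toReal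

/-- Quantile function (right-continuous generalized inverse of the CDF). -/
def quantI (μ : Measure ℝ) (t : ℝ) : ℝ := sSup {x : ℝ | cdfI μ x ≤ t}

/-- The Wasserstein space over `[0,1]`, realized as the set of Borel probability
measures on `ℝ` concentrated on `[0,1]`. -/
def P01 : Set (Measure ℝ) := {μ | IsProbabilityMeasure μ ∧ μ (Set.Icc 0 1) = 1}

/-- The `p`-Wasserstein distance on `[0,1]` via quantile functions. -/
def dWpI (p : ℝ) (μ ν : Measure ℝ) : ℝ :=
  (∫ t in (0:ℝ)..1, |quantI μ t - quantI ν t| ^ p) ^ (1 / p)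

namespace WPaux

variable {μ : Measure ℝ} {p : ℝ}


variable {μ : Measure ℝ}

lemma cdfI_nonneg (μ : Measure ℝ) (x : ℝ) : 0 ≤ cdfI μ x := ENNReal.toReal_nonneg

lemma cdfI_mono (hμ : μ ∈ P01) {x y : ℝ} (hxy : x ≤ y) : cdfI μ x ≤ cdfI μ y := by
  have : IsProbabilityMeasure μ := hμ.1
  exact ENNReal.toReal_mono (measure_ne_top μ _) (measure_mono (Icc_subset_Icc_right hxy))

lemma cdfI_neg (μ : Measure ℝ) {x : ℝ} (hx : x < 0) : cdfI μ x = 0 := by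
  simp [cdfI, Icc_eq_empty_of_lt hx]

lemma cdfI_le_one (hμ : μ ∈ P01) (x : ℝ) : cdfI μ x ≤ 1 := by
  have : IsProbabilityMeasure μ := hμ.1
  exact ENNReal.toReal_le_of_le_ofReal one_pos.le (by simpa using prob_le_one)

lemma cdfI_one (hμ : μ ∈ P01) {x : ℝ} (hx : 1 ≤ x) : cdfI μ x = 1 := by
  have h1 : IsProbabilityMeasure μ := hμ.1
  have h2 : (1:ENNReal) ≤ μ (Icc 0 x) := hμ.2 ▸ measure_mono (Icc_subset_Icc_right hx)
  have h3 : μ (Icc 0 x) = 1 := le_antisymm prob_le_one h2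
  simp [cdfI, h3]

lemma quantI_nonneg (hμ : μ ∈ P01) {s : ℝ} (hs : 0 ≤ s) (hs1 : s < 1) : 0 ≤ quantI μ s := by
  have hsub : Iio (0:ℝ) ⊆ {x : ℝ | cdfI μ x ≤ s} := fun x hx => by
    simp only [mem_setOf_eq, cdfI_neg μ hx]; exact hs
  have hbdd : BddAbove {x : ℝ | cdfI μ x ≤ s} := by
    refine ⟨1, fun x hx => ?_⟩
    by_contra h
    push_neg at h
    exact absurd (le_trans (le_of_eq (cdfI_one hμ h.le).symm) hx) (not_le.mpr hs1)
  calc (0:ℝ) = sSup (Iio (0:ℝ)) := csSup_Iio.symm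
    _ ≤ quantI μ s := csSup_le_csSup hbdd ⟨-1, by norm_num⟩ hsub

lemma quantI_le_one (hμ : μ ∈ P01) {s : ℝ} (hs1 : s < 1) : quantI μ s ≤ 1 := by
  refine Real.sSup_le (fun x hx => ?_) zero_le_one
  by_contra h
  push_neg at h
  exact absurd (le_trans (le_of_eq (cdfI_one hμ h.le).symm) hx) (not_le.mpr hs1)

lemma quantI_ge_one (hμ : μ ∈ P01) {s : ℝ} (hs : 1 ≤ s) : quantI μ s = 0 := by
  have : {x : ℝ | cdfI μ x ≤ s} = univ := eq_univ_of_forall fun x =>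
    le_trans (cdfI_le_one hμ x) hs
  rw [quantI, this, Real.sSup_univ]

lemma quantI_mem (hμ : μ ∈ P01) {s : ℝ} (hs : 0 ≤ s) (hs1 : s ≤ 1) :
    quantI μ s ∈ Icc (0:ℝ) 1 := by
  rcases lt_or_eq_of_le hs1 with h | h
  · exact ⟨quantI_nonneg hμ hs h, quantI_le_one hμ h⟩
  · rw [h, quantI_ge_one hμ le_rfl]; exact ⟨le_rfl, zero_le_one⟩

lemma quantI_dirac {t s : ℝ} (ht : t ∈ Icc (0:ℝ) 1) (hs : 0 ≤ s) (hs1 : s < 1) :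
    quantI (Measure.dirac t) s = t := by
  have hset : {x : ℝ | cdfI (Measure.dirac t) x ≤ s} = Iio t := by
    ext x
    have : cdfI (Measure.dirac t) x = if t ∈ Icc 0 x then 1 else 0 := by
      simp only [cdfI, Measure.dirac_apply' t measurableSet_Icc]
      by_cases h : t ∈ Icc 0 x <;> simp [h, indicator_of_mem, indicator_of_notMem]
    simp only [mem_setOf_eq, this, mem_Iio]
    by_cases h : t ∈ Icc 0 x
    · simp only [if_pos h]
      constructor
      · intro hle; exact absurd hs1 (not_lt.mpr hle)
      · intro hlt; exact absurd h.2 (not_le.mpr hlt)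
    · simp only [if_neg h]
      constructor
      · intro _
        by_contra hc
        push_neg at hc
        exact h ⟨ht.1, hc⟩
      · intro _; exact hs
  rw [quantI, hset, csSup_Iio]

/-- modified quantile, globally monotone -/
def Qm (μ : Measure ℝ) (s : ℝ) : ℝ := if s < 1 then quantI μ s else 1

lemma quantI_empty {s : ℝ} (hs : s < 0) : quantI μ s = 0 := by
  have : {x : ℝ | cdfI μ x ≤ s} = ∅ := by
    ext x; simp only [mem_setOf_eq, mem_empty_iff_false, iff_false, not_le]
    exact lt_of_lt_of_le hs (cdfI_nonneg μ x)
  rw [quantI, this, Real.sSup_empty]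

lemma Qm_mono (hμ : μ ∈ P01) : Monotone (Qm μ) := by
  intro s s' hss
  unfold Qm
  by_cases h' : s' < 1
  · have h : s < 1 := lt_of_le_of_lt hss h'
    rw [if_pos h, if_pos h']
    by_cases hs0 : s < 0
    · rw [quantI_empty hs0]
      by_cases hs'0 : s' < 0
      · rw [quantI_empty hs'0]
      · exact quantI_nonneg hμ (not_lt.mp hs'0) h'
    · push_neg at hs0
      refine csSup_le_csSup ?_ ⟨-1, by simpa [cdfI_neg μ (by norm_num : (-1:ℝ) < 0)]⟩
        (fun x hx => le_trans hx hss)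
      refine ⟨1, fun x hx => ?_⟩
      by_contra hc
      push_neg at hc
      exact absurd (le_trans (le_of_eq (cdfI_one hμ hc.le).symm) hx) (not_le.mpr h')
  · rw [if_neg h']
    by_cases h : s < 1
    · rw [if_pos h]
      exact quantI_le_one hμ h
    · rw [if_neg h]

lemma Qm_mem (hμ : μ ∈ P01) {s : ℝ} (hs : 0 ≤ s) : Qm μ s ∈ Icc (0:ℝ) 1 := by
  unfold Qm
  by_cases h : s < 1
  · rw [if_pos h]; exact ⟨quantI_nonneg hμ hs h, quantI_le_one hμ h⟩
  · rw [if_neg h]; exact ⟨zero_le_one, le_rfl⟩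

lemma Qm_measurable (hμ : μ ∈ P01) : Measurable (Qm μ) := (Qm_mono hμ).measurable


lemma intervalIntegrable_Qm (hμ : μ ∈ P01) (p t : ℝ) (hp : 0 ≤ p) (ht : t ∈ Icc (0:ℝ) 1) :
    IntervalIntegrable (fun s => |Qm μ s - t| ^ p) volume 0 1 := by
  have hmeas : Measurable fun s => |Qm μ s - t| ^ p :=
    (Real.continuous_rpow_const hp).measurable.comp (((Qm_measurable hμ).sub measurable_const).abs)
  rw [intervalIntegrable_iff_integrableOn_Ioc_of_le zero_le_one]
  refine Integrable.mono' (integrable_const 1) hmeas.aestronglyMeasurable ?_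
  rw [ae_restrict_iff' measurableSet_Ioc]
  refine Filter.Eventually.of_forall fun s hs => ?_
  have hQ := Qm_mem hμ (le_of_lt hs.1)
  have habs : |Qm μ s - t| ≤ 1 := by
    rw [abs_le]
    constructor <;> [linarith [hQ.1, ht.2]; linarith [hQ.2, ht.1]]
  rw [Real.norm_eq_abs, abs_of_nonneg (Real.rpow_nonneg (abs_nonneg _) p)]
  exact Real.rpow_le_one (abs_nonneg _) habs hp

lemma intervalIntegrable_quant (hμ : μ ∈ P01) (p t : ℝ) (hp : 0 ≤ p) (ht : t ∈ Icc (0:ℝ) 1) :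
    IntervalIntegrable (fun s => |quantI μ s - t| ^ p) volume 0 1 := by
  refine (intervalIntegrable_Qm hμ p t hp ht).congr_ae ?_
  rw [Filter.EventuallyEq, ae_restrict_iff' measurableSet_uIoc]
  refine Filter.Eventually.mono (measure_eq_zero_iff_ae_notMem.mp (measure_singleton (1:ℝ))) ?_
  intro s hs1 hs
  rw [uIoc_of_le zero_le_one] at hs
  have : s < 1 := lt_of_le_of_ne hs.2 hs1
  simp [Qm, this]

lemma dWpI_dirac_eq (hμ : μ ∈ P01) (p t : ℝ) (ht : t ∈ Icc (0:ℝ) 1) :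
    dWpI p μ (Measure.dirac t) = (∫ s in (0:ℝ)..1, |quantI μ s - t| ^ p) ^ (1/p) := by
  unfold dWpI
  congr 1
  refine intervalIntegral.integral_congr_ae ?_
  refine Filter.Eventually.mono (measure_eq_zero_iff_ae_notMem.mp (measure_singleton (1:ℝ))) ?_
  intro s hs1 hs
  rw [uIoc_of_le zero_le_one] at hs
  have h1 : s < 1 := lt_of_le_of_ne hs.2 hs1
  rw [quantI_dirac ht (le_of_lt hs.1) h1]

lemma right_limit (hμ : μ ∈ P01) {s : ℝ} (hs : cdfI μ 0 < s) :
    ∃ x : ℝ, 0 < x ∧ cdfI μ x ≤ s := by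
  have : IsProbabilityMeasure μ := hμ.1
  have hanti : Antitone (fun n : ℕ => Icc (0:ℝ) (1/(n+1))) := by
    intro m n hmn
    apply Icc_subset_Icc_right
    apply one_div_le_one_div_of_le (by positivity)
    exact_mod_cast add_le_add_left (Nat.cast_le.mpr hmn) 1
  have hinter : ⋂ n : ℕ, Icc (0:ℝ) (1/(n+1)) = {0} := by
    ext x
    simp only [mem_iInter, mem_Icc, mem_singleton_iff]
    constructor
    · rintro h
      refine le_antisymm ?_ (h 0).1
      by_contra hc
      push_neg at hc
      obtain ⟨n, hn⟩ := exists_nat_one_div_lt hc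
      exact absurd (h n).2 (not_le.mpr hn)
    · rintro rfl n; exact ⟨le_rfl, by positivity⟩
  have htend := MeasureTheory.tendsto_measure_iInter_atTop
    (μ := μ) (s := fun n : ℕ => Icc (0:ℝ) (1/(n+1)))
    (fun n => (measurableSet_Icc).nullMeasurableSet) hanti ⟨0, measure_ne_top μ _⟩
  rw [hinter] at htend
  have htr : Filter.Tendsto (fun n : ℕ => cdfI μ (1/(n+1))) Filter.atTop (nhds (cdfI μ 0)) := by
    have h0 : Icc (0:ℝ) 0 = {0} := Icc_self 0
    have := (ENNReal.tendsto_toReal (measure_ne_top μ {0})).comp htend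
    simpa [cdfI, h0, Function.comp_def] using this
  have hev : ∀ᶠ n : ℕ in Filter.atTop, cdfI μ (1/(n+1)) < s :=
    htr.eventually_lt_const hs
  obtain ⟨n, hn⟩ := hev.exists
  exact ⟨1/(n+1), by positivity, hn.le⟩

lemma left_limit (hμ : μ ∈ P01) {s : ℝ} (hs : s < (μ (Ico 0 1)).toReal) :
    ∃ y : ℝ, y < 1 ∧ s < cdfI μ y := by
  have : IsProbabilityMeasure μ := hμ.1
  have hmono : Monotone (fun n : ℕ => Icc (0:ℝ) (1 - 1/(n+1))) := by
    intro m n hmn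
    apply Icc_subset_Icc_right
    have : (1:ℝ)/(n+1) ≤ 1/(m+1) := by
      apply one_div_le_one_div_of_le (by positivity)
      exact_mod_cast add_le_add_left (Nat.cast_le.mpr hmn) 1
    linarith
  have hunion : ⋃ n : ℕ, Icc (0:ℝ) (1 - 1/(n+1)) = Ico 0 1 := by
    ext x
    simp only [mem_iUnion, mem_Icc, mem_Ico]
    constructor
    · rintro ⟨n, h0, h1⟩
      refine ⟨h0, lt_of_le_of_lt h1 ?_⟩
      have : (0:ℝ) < 1/(n+1) := by positivity
      linarith
    · rintro ⟨h0, h1⟩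
      obtain ⟨n, hn⟩ := exists_nat_one_div_lt (by linarith : (0:ℝ) < 1 - x)
      exact ⟨n, h0, by linarith⟩
  have htend := MeasureTheory.tendsto_measure_iUnion_atTop
    (μ := μ) (s := fun n : ℕ => Icc (0:ℝ) (1 - 1/(n+1))) hmono
  rw [hunion] at htend
  have htr : Filter.Tendsto (fun n : ℕ => cdfI μ (1 - 1/(n+1))) Filter.atTop
      (nhds ((μ (Ico 0 1)).toReal)) := by
    have := (ENNReal.tendsto_toReal (measure_ne_top μ _)).comp htend
    simpa [cdfI, Function.comp_def] using this
  obtain ⟨n, hn⟩ := (htr.eventually_const_lt hs).exists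
  have : (0:ℝ) < 1/(n+1) := by positivity
  exact ⟨1 - 1/(n+1), by linarith, hn⟩

lemma quantI_eq_zero (hμ : μ ∈ P01) {s : ℝ} (hs : 0 ≤ s) (hsa : s < cdfI μ 0) :
    quantI μ s = 0 := by
  have hset : {x : ℝ | cdfI μ x ≤ s} = Iio 0 := by
    ext x
    simp only [mem_setOf_eq, mem_Iio]
    constructor
    · intro hx
      by_contra hc
      push_neg at hc
      exact absurd (le_trans (cdfI_mono hμ hc) hx) (not_le.mpr hsa)
    · intro hx; rw [cdfI_neg μ hx]; exact hs
  rw [quantI, hset, csSup_Iio]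

lemma quantI_pos (hμ : μ ∈ P01) {s : ℝ} (hs1 : s < 1) (hsa : cdfI μ 0 < s) :
    0 < quantI μ s := by
  obtain ⟨x, hx0, hx⟩ := right_limit hμ hsa
  have hbdd : BddAbove {x : ℝ | cdfI μ x ≤ s} := by
    refine ⟨1, fun y hy => ?_⟩
    by_contra h
    push_neg at h
    exact absurd (le_trans (le_of_eq (cdfI_one hμ h.le).symm) hy) (not_le.mpr hs1)
  exact lt_of_lt_of_le hx0 (le_csSup hbdd hx)

lemma quantI_lt_one (hμ : μ ∈ P01) {s : ℝ} (hs : 0 < s) (hsb : s < (μ (Ico 0 1)).toReal) :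
    quantI μ s < 1 := by
  obtain ⟨y, hy1, hy⟩ := left_limit hμ hsb
  have hy0 : 0 ≤ y := by
    by_contra h
    push_neg at h
    rw [cdfI_neg μ h] at hy
    exact absurd hy (not_lt.mpr hs.le)
  have : quantI μ s ≤ y := by
    refine Real.sSup_le (fun x hx => ?_) hy0
    by_contra h
    push_neg at h
    exact absurd (le_trans (cdfI_mono hμ h.le) hx) (not_le.mpr hy)
  exact lt_of_le_of_lt this hy1

lemma Ico_split : Ico (0:ℝ) 1 = {0} ∪ Ioo 0 1 := by
  ext x
  simp only [mem_Ico, mem_union, mem_singleton_iff, mem_Ioo]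
  constructor
  · rintro ⟨h0, h1⟩
    rcases eq_or_lt_of_le h0 with h | h
    · exact Or.inl h.symm
    · exact Or.inr ⟨h, h1⟩
  · rintro (rfl | ⟨h0, h1⟩)
    · exact ⟨le_rfl, one_pos⟩
    · exact ⟨h0.le, h1⟩

lemma Ico_toReal (hμ : μ ∈ P01) (hm : μ (Ioo 0 1) = 0) :
    (μ (Ico 0 1)).toReal = cdfI μ 0 := by
  have h : μ (Ico 0 1) = μ {0} := by
    rw [Ico_split]; exact le_antisymm (le_trans (measure_union_le _ _) (by rw [hm, add_zero])) (measure_mono subset_union_left)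
  rw [h, cdfI, Icc_self]

lemma quantI_eq_one (hμ : μ ∈ P01) (hm : μ (Ioo 0 1) = 0) {s : ℝ}
    (hs1 : s < 1) (hsa : cdfI μ 0 < s) : quantI μ s = 1 := by
  have hIco : (μ (Ico 0 1)).toReal = cdfI μ 0 := Ico_toReal hμ hm
  have hset : {x : ℝ | cdfI μ x ≤ s} = Iio 1 := by
    ext x
    simp only [mem_setOf_eq, mem_Iio]
    constructor
    · intro hx
      by_contra hc
      push_neg at hc
      rw [cdfI_one hμ hc] at hx
      exact absurd hx (not_le.mpr hs1)
    · intro hx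
      rcases lt_or_ge x 0 with h | h
      · rw [cdfI_neg μ h]
        exact le_trans (cdfI_nonneg μ 0) hsa.le
      · have : cdfI μ x ≤ (μ (Ico 0 1)).toReal := by
          have : IsProbabilityMeasure μ := hμ.1
          exact ENNReal.toReal_mono (measure_ne_top μ _)
            (measure_mono (fun y hy => ⟨hy.1, lt_of_le_of_lt hy.2 hx⟩))
        rw [hIco] at this
        exact le_trans this hsa.le
  rw [quantI, hset, csSup_Iio]

lemma ae_ne (c : ℝ) : ∀ᵐ s : ℝ, s ≠ c := by
  refine Filter.Eventually.mono (measure_eq_zero_iff_ae_notMem.mp (measure_singleton c)) ?_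
  intro s hs
  simpa using hs

lemma integral_step (hμ : μ ∈ P01) (hm : μ (Ioo 0 1) = 0) (hp : 0 ≤ p) {t : ℝ}
    (ht : t ∈ Icc (0:ℝ) 1) :
    ∫ s in (0:ℝ)..1, |quantI μ s - t| ^ p
      = cdfI μ 0 * t ^ p + (1 - cdfI μ 0) * (1 - t) ^ p := by
  set a := cdfI μ 0 with ha
  have ha0 : 0 ≤ a := cdfI_nonneg μ 0
  have ha1 : a ≤ 1 := cdfI_le_one hμ 0
  have hint := intervalIntegrable_quant hμ p t hp ht
  have hint1 : IntervalIntegrable (fun s => |quantI μ s - t| ^ p) volume 0 a :=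
    hint.mono_set (by rw [uIcc_of_le ha0, uIcc_of_le zero_le_one]; exact Icc_subset_Icc_right ha1)
  have hint2 : IntervalIntegrable (fun s => |quantI μ s - t| ^ p) volume a 1 :=
    hint.mono_set (by rw [uIcc_of_le ha1, uIcc_of_le zero_le_one]; exact Icc_subset_Icc_left ha0)
  have e1 : ∫ s in (0:ℝ)..a, |quantI μ s - t| ^ p = a * t ^ p := by
    have : ∫ s in (0:ℝ)..a, |quantI μ s - t| ^ p = ∫ _ in (0:ℝ)..a, t ^ p := by
      refine intervalIntegral.integral_congr_ae ?_
      filter_upwards [ae_ne a] with s hsne hs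
      rw [uIoc_of_le ha0] at hs
      have hsa : s < a := lt_of_le_of_ne hs.2 hsne
      rw [quantI_eq_zero hμ hs.1.le hsa, zero_sub, abs_neg, abs_of_nonneg ht.1]
    rw [this, intervalIntegral.integral_const, smul_eq_mul, sub_zero]
  have e2 : ∫ s in a..(1:ℝ), |quantI μ s - t| ^ p = (1 - a) * (1 - t) ^ p := by
    have : ∫ s in a..(1:ℝ), |quantI μ s - t| ^ p = ∫ _ in a..(1:ℝ), (1 - t) ^ p := by
      refine intervalIntegral.integral_congr_ae ?_
      filter_upwards [ae_ne (1:ℝ)] with s hsne hs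
      rw [uIoc_of_le ha1] at hs
      have hs1 : s < 1 := lt_of_le_of_ne hs.2 hsne
      rw [quantI_eq_one hμ hm hs1 hs.1, abs_of_nonneg (by linarith [ht.2] : (0:ℝ) ≤ 1 - t)]
    rw [this, intervalIntegral.integral_const, smul_eq_mul]
  rw [← intervalIntegral.integral_add_adjacent_intervals hint1 hint2, e1, e2]

lemma convex_bound (hp : 1 < p) {t : ℝ} (ht : t ∈ Icc (0:ℝ) 1) :
    ((1:ℝ)/2) ^ p ≤ (1/2) * t ^ p + (1/2) * (1 - t) ^ p := by
  have h := (convexOn_rpow hp.le).2 (show t ∈ Ici (0:ℝ) from ht.1)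
    (show 1 - t ∈ Ici (0:ℝ) from by simp only [mem_Ici]; linarith [ht.2])
    (by norm_num : (0:ℝ) ≤ 1/2) (by norm_num : (0:ℝ) ≤ 1/2) (by norm_num)
  simp only [smul_eq_mul] at h
  have : (1:ℝ)/2 * t + 1/2 * (1 - t) = 1/2 := by ring
  rwa [this] at h

lemma localmin_half (hp : 1 < p) {a : ℝ} (ha0 : 0 ≤ a) (ha1 : a ≤ 1)
    (h : ∀ t ∈ Icc (0:ℝ) 1, ((1:ℝ)/2) ^ p ≤ a * t ^ p + (1 - a) * (1 - t) ^ p) :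
    a = 1/2 := by
  set f : ℝ → ℝ := fun t => a * t ^ p + (1 - a) * (1 - t) ^ p with hf
  have hval : f (1/2) = (1/2) ^ p := by
    simp only [hf]
    have : (1:ℝ) - 1/2 = 1/2 := by norm_num
    rw [this]; ring
  have hmin : IsLocalMin f (1/2) := by
    rw [IsLocalMin, IsMinFilter]
    filter_upwards [isOpen_Ioo.mem_nhds (by norm_num : (1/2:ℝ) ∈ Ioo (0:ℝ) 1)] with t htm
    rw [hval]
    exact h t ⟨htm.1.le, htm.2.le⟩
  have hd1 : HasDerivAt (fun t : ℝ => t ^ p) (p * (1/2:ℝ) ^ (p - 1)) (1/2) :=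
    Real.hasDerivAt_rpow_const (Or.inl (by norm_num))
  have hd2 : HasDerivAt (fun t : ℝ => (1 - t) ^ p) (p * (1/2:ℝ) ^ (p - 1) * (-1)) (1/2) := by
    have hinner : HasDerivAt (fun t : ℝ => 1 - t) (-1) (1/2) := by
      simpa using (hasDerivAt_id (1/2:ℝ)).const_sub 1
    have houter : HasDerivAt (fun y : ℝ => y ^ p) (p * (1/2:ℝ) ^ (p - 1)) (1 - 1/2) := by
      have : (1:ℝ) - 1/2 = 1/2 := by norm_num
      rw [this]; exact hd1
    exact houter.comp (1/2) hinner
  have hD : HasDerivAt f (a * (p * (1/2:ℝ) ^ (p - 1)) + (1 - a) * (p * (1/2:ℝ) ^ (p - 1) * (-1)))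
      (1/2) := (hd1.const_mul a).add (hd2.const_mul (1 - a))
  have hzero := hmin.hasDerivAt_eq_zero hD
  have hpos : 0 < p * (1/2:ℝ) ^ (p - 1) :=
    mul_pos (by linarith) (Real.rpow_pos_of_pos (by norm_num) _)
  nlinarith [hzero, hpos]

lemma rpow_inv_roundtrip (hp : 0 < p) {x : ℝ} (hx : 0 ≤ x) : (x ^ (1/p)) ^ p = x := by
  rw [← Real.rpow_mul hx, one_div, inv_mul_cancel₀ hp.ne', Real.rpow_one]

lemma rpow_roundtrip (hp : 0 < p) {x : ℝ} (hx : 0 ≤ x) : (x ^ p) ^ (1/p) = x := by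
  rw [← Real.rpow_mul hx, mul_one_div, div_self hp.ne', Real.rpow_one]

lemma dWpI_nonneg (p : ℝ) (μ ν : Measure ℝ) : 0 ≤ dWpI p μ ν :=
  Real.rpow_nonneg (intervalIntegral.integral_nonneg zero_le_one
    (fun s _ => Real.rpow_nonneg (abs_nonneg _) p)) _

lemma half_bound (hμ : μ ∈ P01) (hp : 1 < p) :
    (∫ s in (0:ℝ)..1, |quantI μ s - 1/2| ^ p) ≤ ((1:ℝ)/2) ^ p := by
  have hp0 : (0:ℝ) ≤ p := by linarith
  have hhalf : (1/2:ℝ) ∈ Icc (0:ℝ) 1 := by norm_num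
  have hconst : (∫ _ in (0:ℝ)..1, ((1:ℝ)/2) ^ p) = ((1:ℝ)/2) ^ p := by
    rw [intervalIntegral.integral_const, smul_eq_mul, sub_zero, one_mul]
  rw [← hconst]
  refine intervalIntegral.integral_mono_on zero_le_one
    (intervalIntegrable_quant hμ p (1/2) hp0 hhalf) intervalIntegrable_const ?_
  intro s hs
  have hq := quantI_mem hμ hs.1 hs.2
  have : |quantI μ s - 1/2| ≤ 1/2 := by
    rw [abs_le]; constructor <;> [linarith [hq.1]; linarith [hq.2]]
  exact Real.rpow_le_rpow (abs_nonneg _) this hp0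

lemma dWpI_half_le (hμ : μ ∈ P01) (hp : 1 < p) :
    dWpI p μ (Measure.dirac (1/2)) ≤ 1/2 := by
  have hp0 : (0:ℝ) < p := by linarith
  rw [dWpI_dirac_eq hμ p (1/2) (by norm_num)]
  calc (∫ s in (0:ℝ)..1, |quantI μ s - 1/2| ^ p) ^ (1/p)
      ≤ (((1:ℝ)/2) ^ p) ^ (1/p) :=
        Real.rpow_le_rpow (intervalIntegral.integral_nonneg zero_le_one
          (fun s _ => Real.rpow_nonneg (abs_nonneg _) p)) (half_bound hμ hp)
          (by positivity)
    _ = 1/2 := rpow_roundtrip hp0 (by norm_num)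

lemma sInf_value (hp : 1 < p) (hμ : μ ∈ P01) (hm : μ (Ioo 0 1) = 0)
    (ha : cdfI μ 0 = 1/2) :
    sInf {r : ℝ | ∃ t ∈ Icc (0:ℝ) 1, r = dWpI p μ (Measure.dirac t)} = 1/2 := by
  have hp0 : (0:ℝ) < p := by linarith
  have hbdd : BddBelow {r : ℝ | ∃ t ∈ Icc (0:ℝ) 1, r = dWpI p μ (Measure.dirac t)} := by
    refine ⟨0, fun r hr => ?_⟩
    obtain ⟨t, _, rfl⟩ := hr
    exact dWpI_nonneg p μ _
  have hval : ∀ t ∈ Icc (0:ℝ) 1, dWpI p μ (Measure.dirac t)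
      = ((1/2) * t ^ p + (1/2) * (1 - t) ^ p) ^ (1/p) := by
    intro t ht
    rw [dWpI_dirac_eq hμ p t ht, integral_step hμ hm hp0.le ht, ha]
    norm_num
  refine le_antisymm ?_ ?_
  · refine csInf_le_of_le hbdd ⟨1/2, by norm_num, rfl⟩ ?_
    rw [hval (1/2) (by norm_num)]
    have : (1/2:ℝ) * (1/2) ^ p + 1/2 * (1 - 1/2) ^ p = (1/2) ^ p := by norm_num; ring
    rw [this, rpow_roundtrip hp0 (by norm_num)]
  · refine le_csInf ⟨dWpI p μ (Measure.dirac (1/2)), 1/2, by norm_num, rfl⟩ ?_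
    rintro r ⟨t, ht, rfl⟩
    rw [hval t ht]
    calc (1/2:ℝ) = (((1:ℝ)/2) ^ p) ^ (1/p) := (rpow_roundtrip hp0 (by norm_num)).symm
      _ ≤ ((1/2) * t ^ p + (1/2) * (1 - t) ^ p) ^ (1/p) :=
          Real.rpow_le_rpow (by positivity) (convex_bound hp ht) (by positivity)

lemma measure_eq (hμ : μ ∈ P01) (hm : μ (Ioo 0 1) = 0) (h0 : μ {0} = 1/2) :
    μ = (1/2 : ENNReal) • Measure.dirac (0:ℝ) + (1/2 : ENNReal) • Measure.dirac (1:ℝ) := by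
  have : IsProbabilityMeasure μ := hμ.1
  have hcompl : μ ((Icc (0:ℝ) 1)ᶜ) = 0 := by
    rw [measure_compl measurableSet_Icc (measure_ne_top μ _), hμ.2, measure_univ, tsub_self]
  refine Measure.ext_of_Iic μ _ fun x => ?_
  have hrhs : ((1/2 : ENNReal) • Measure.dirac (0:ℝ) + (1/2 : ENNReal) • Measure.dirac (1:ℝ))
      (Iic x) = (1/2 : ENNReal) * (Iic x).indicator 1 0 + (1/2 : ENNReal) * (Iic x).indicator 1 1 := by
    simp [Measure.dirac_apply' _ measurableSet_Iic]
  rcases lt_or_ge x 0 with hx | hx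
  · have hlhs : μ (Iic x) = 0 := by
      refine measure_mono_null (fun y hy => ?_) hcompl
      simp only [mem_compl_iff, mem_Icc, not_and, not_le]
      intro h0y
      have := mem_Iic.mp hy
      linarith
    rw [hlhs, hrhs, indicator_of_notMem (by simpa using hx.not_ge),
      indicator_of_notMem (by simp only [mem_Iic]; intro h; linarith)]
    simp
  · rcases lt_or_ge x 1 with hx1 | hx1
    · have hlhs : μ (Iic x) = 1/2 := by
        refine le_antisymm ?_ ?_
        · have hsub : Iic x ⊆ (Icc (0:ℝ) 1)ᶜ ∪ ({0} ∪ Ioo 0 1) := by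
            intro y hy
            simp only [mem_Iic] at hy
            by_cases hy0 : y ∈ Icc (0:ℝ) 1
            · right
              rcases eq_or_lt_of_le hy0.1 with h | h
              · exact Or.inl h.symm
              · exact Or.inr ⟨h, lt_of_le_of_lt hy hx1⟩
            · exact Or.inl hy0
          calc μ (Iic x) ≤ μ ((Icc (0:ℝ) 1)ᶜ ∪ ({0} ∪ Ioo 0 1)) := measure_mono hsub
            _ ≤ μ ((Icc (0:ℝ) 1)ᶜ) + (μ {0} + μ (Ioo 0 1)) :=
                le_trans (measure_union_le _ _) (by gcongr; exact measure_union_le _ _)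
            _ = 1/2 := by rw [hcompl, h0, hm, zero_add, add_zero]
        · rw [← h0]
          exact measure_mono (by simp [singleton_subset_iff, hx])
      rw [hlhs, hrhs, indicator_of_mem (by simpa using hx) (1 : ℝ → ENNReal),
        indicator_of_notMem (by simpa using hx1.not_ge)]
      simp
    · have hlhs : μ (Iic x) = 1 := by
        refine le_antisymm prob_le_one ?_
        rw [← hμ.2]
        exact measure_mono (fun y hy => le_trans hy.2 hx1)
      rw [hlhs, hrhs, indicator_of_mem (by simpa using hx) (1 : ℝ → ENNReal),
        indicator_of_mem (by simpa using hx1) (1 : ℝ → ENNReal)]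
      simp only [Pi.one_apply, mul_one]
      rw [ENNReal.div_add_div_same]
      rw [show (1:ENNReal) + 1 = 2 from one_add_one_eq_two,
        ENNReal.div_self (by norm_num) (by norm_num)]

end WPaux

open WPaux in
/-- For `p > 1` and `μ ∈ W_p([0,1])`, the distance from `μ` to the set of Dirac masses
is at most `1/2`, with equality iff `μ = (1/2)δ₀ + (1/2)δ₁`. -/
theorem dist_to_diracs (p : ℝ) (hp : 1 < p) (μ : Measure ℝ) (hμ : μ ∈ P01) :
    sInf {r : ℝ | ∃ t ∈ Set.Icc (0:ℝ) 1, r = dWpI p μ (Measure.dirac t)} ≤ 1 / 2 ∧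
    (sInf {r : ℝ | ∃ t ∈ Set.Icc (0:ℝ) 1, r = dWpI p μ (Measure.dirac t)} = 1 / 2 ↔
      μ = (1/2 : ENNReal) • Measure.dirac (0:ℝ) + (1/2 : ENNReal) • Measure.dirac (1:ℝ)) := by
  have : IsProbabilityMeasure μ := hμ.1
  have hp0 : (0:ℝ) < p := by linarith
  have hbdd : BddBelow {r : ℝ | ∃ t ∈ Set.Icc (0:ℝ) 1, r = dWpI p μ (Measure.dirac t)} := by
    refine ⟨0, fun r hr => ?_⟩
    obtain ⟨t, _, rfl⟩ := hr
    exact dWpI_nonneg p μ _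
  have hmemS : dWpI p μ (Measure.dirac (1/2)) ∈
      {r : ℝ | ∃ t ∈ Set.Icc (0:ℝ) 1, r = dWpI p μ (Measure.dirac t)} :=
    ⟨1/2, by norm_num, rfl⟩
  have part1 : sInf {r : ℝ | ∃ t ∈ Set.Icc (0:ℝ) 1, r = dWpI p μ (Measure.dirac t)} ≤ 1/2 :=
    csInf_le_of_le hbdd hmemS (dWpI_half_le hμ hp)
  refine ⟨part1, ?_, ?_⟩
  · -- forward direction
    intro heq
    have hge : ∀ r ∈ {r : ℝ | ∃ t ∈ Set.Icc (0:ℝ) 1, r = dWpI p μ (Measure.dirac t)},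
        1/2 ≤ r := fun r hr => heq ▸ csInf_le hbdd hr
    -- Step A : the integral against t = 1/2 is exactly (1/2)^p
    have hIhalf : (∫ s in (0:ℝ)..1, |quantI μ s - 1/2| ^ p) = ((1:ℝ)/2) ^ p := by
      have hnn : 0 ≤ ∫ s in (0:ℝ)..1, |quantI μ s - 1/2| ^ p :=
        intervalIntegral.integral_nonneg zero_le_one
          (fun s _ => Real.rpow_nonneg (abs_nonneg _) p)
      have hval : dWpI p μ (Measure.dirac (1/2)) = 1/2 :=
        le_antisymm (dWpI_half_le hμ hp) (hge _ hmemS)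
      rw [dWpI_dirac_eq hμ p (1/2) (by norm_num)] at hval
      calc (∫ s in (0:ℝ)..1, |quantI μ s - 1/2| ^ p)
          = ((∫ s in (0:ℝ)..1, |quantI μ s - 1/2| ^ p) ^ (1/p)) ^ p :=
            (rpow_inv_roundtrip hp0 hnn).symm
        _ = ((1:ℝ)/2) ^ p := by rw [hval]
    -- switch to the monotone modification Qm
    have hIQm : (∫ s in Ioc (0:ℝ) 1, |Qm μ s - 1/2| ^ p) = ((1:ℝ)/2) ^ p := by
      rw [← intervalIntegral.integral_of_le zero_le_one, ← hIhalf]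
      refine intervalIntegral.integral_congr_ae ?_
      filter_upwards [ae_ne (1:ℝ)] with s hsne hs
      rw [uIoc_of_le zero_le_one] at hs
      have : s < 1 := lt_of_le_of_ne hs.2 hsne
      simp [Qm, this]
    set g : ℝ → ℝ := fun s => ((1:ℝ)/2) ^ p - |Qm μ s - 1/2| ^ p with hg
    have hgnonneg : ∀ s, 0 ≤ g s := by
      intro s
      rcases lt_or_ge s 0 with hs | hs
      · have : Qm μ s = 0 := by
          simp only [Qm, if_pos (lt_trans hs one_pos)]
          exact quantI_empty hs
        simp [hg, this, abs_of_nonpos, Real.rpow_nonneg]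
      · have hq := Qm_mem hμ hs
        have : |Qm μ s - 1/2| ≤ 1/2 := by
          rw [abs_le]; constructor <;> [linarith [hq.1]; linarith [hq.2]]
        have := Real.rpow_le_rpow (abs_nonneg _) this hp0.le
        simp only [hg]
        linarith
    have hQmint : IntegrableOn (fun s => |Qm μ s - 1/2| ^ p) (Ioc (0:ℝ) 1) volume := by
      have := intervalIntegrable_Qm hμ p (1/2) hp0.le (by norm_num)
      rwa [intervalIntegrable_iff_integrableOn_Ioc_of_le zero_le_one] at this
    have hgint : Integrable g (volume.restrict (Ioc (0:ℝ) 1)) :=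
      (integrable_const _).sub hQmint
    have hg0 : (∫ s in Ioc (0:ℝ) 1, g s) = 0 := by
      rw [integral_sub (integrable_const _) hQmint, hIQm, integral_const,
        measureReal_restrict_apply_univ, Real.volume_real_Ioc]
      norm_num
    have hgae : ∀ᵐ s : ℝ, s ∈ Ioc (0:ℝ) 1 → g s = 0 := by
      have := (integral_eq_zero_iff_of_nonneg (fun s => hgnonneg s) hgint).mp hg0
      rw [Filter.EventuallyEq, ae_restrict_iff' measurableSet_Ioc] at this
      exact this
    have habs : ∀ᵐ s : ℝ, s ∈ Ioc (0:ℝ) 1 → |Qm μ s - 1/2| = 1/2 := by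
      filter_upwards [hgae] with s hsg hs
      have h1 : |Qm μ s - 1/2| ^ p = ((1:ℝ)/2) ^ p := by
        have := hsg hs
        simp only [hg] at this
        linarith
      exact Real.rpow_left_injOn hp0.ne' (by simp only [Set.mem_setOf_eq]; exact abs_nonneg _) (by simp only [Set.mem_setOf_eq]; norm_num) h1
    -- the middle mass vanishes
    have hm : μ (Ioo (0:ℝ) 1) = 0 := by
      by_contra hm
      set a := cdfI μ 0 with ha
      set b1 := (μ (Ico (0:ℝ) 1)).toReal with hb1
      have ha0 : 0 ≤ a := cdfI_nonneg μ 0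
      have hb1le : b1 ≤ 1 := by
        rw [hb1]
        have := ENNReal.toReal_mono (measure_ne_top μ univ) (measure_mono (subset_univ (Ico (0:ℝ) 1)))
        simpa using this
      have hab : a < b1 := by
        have hsplit : μ (Ico (0:ℝ) 1) = μ {0} + μ (Ioo 0 1) := by
          rw [Ico_split]
          exact measure_union (by simp) measurableSet_Ioo
        have hA : a = (μ {0}).toReal := by rw [ha, cdfI, Icc_self]
        have hmpos : 0 < (μ (Ioo (0:ℝ) 1)).toReal :=
          ENNReal.toReal_pos hm (measure_ne_top μ _)
        rw [hb1, hsplit, ENNReal.toReal_add (measure_ne_top μ _) (measure_ne_top μ _), hA]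
        linarith
      have hsub : Ioo a b1 ⊆ {s : ℝ | ¬(s ∈ Ioc (0:ℝ) 1 → |Qm μ s - 1/2| = 1/2)} := by
        intro s hs
        have hs0 : 0 < s := lt_of_le_of_lt ha0 hs.1
        have hs1 : s < 1 := lt_of_lt_of_le hs.2 hb1le
        have hq1 : 0 < quantI μ s := quantI_pos hμ hs1 hs.1
        have hq2 : quantI μ s < 1 := quantI_lt_one hμ hs0 hs.2
        have hQ : Qm μ s = quantI μ s := by simp [Qm, hs1]
        simp only [mem_setOf_eq, not_forall]
        refine ⟨⟨hs0, hs1.le⟩, ?_⟩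
        rw [hQ]
        intro hc
        rcases abs_eq (by norm_num : (0:ℝ) ≤ 1/2) |>.mp hc with h | h <;> linarith
      have hnull : volume {s : ℝ | ¬(s ∈ Ioc (0:ℝ) 1 → |Qm μ s - 1/2| = 1/2)} = 0 := by
        exact ae_iff.mp habs
      have : volume (Ioo a b1) = 0 := measure_mono_null hsub hnull
      rw [Real.volume_Ioo] at this
      have := ENNReal.ofReal_eq_zero.mp this
      linarith
    -- identify a = 1/2
    have hbound : ∀ t ∈ Set.Icc (0:ℝ) 1,
        ((1:ℝ)/2) ^ p ≤ cdfI μ 0 * t ^ p + (1 - cdfI μ 0) * (1 - t) ^ p := by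
      intro t ht
      have hmem : dWpI p μ (Measure.dirac t) ∈
          {r : ℝ | ∃ t ∈ Set.Icc (0:ℝ) 1, r = dWpI p μ (Measure.dirac t)} := ⟨t, ht, rfl⟩
      have hr := hge _ hmem
      rw [dWpI_dirac_eq hμ p t ht, integral_step hμ hm hp0.le ht] at hr
      have hXnn : 0 ≤ cdfI μ 0 * t ^ p + (1 - cdfI μ 0) * (1 - t) ^ p := by
        have h1 : (0:ℝ) ≤ t ^ p := Real.rpow_nonneg ht.1 p
        have h2 : (0:ℝ) ≤ (1 - t) ^ p := Real.rpow_nonneg (by linarith [ht.2]) p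
        have h3 := cdfI_nonneg μ 0
        have h4 := cdfI_le_one hμ 0
        nlinarith
      calc ((1:ℝ)/2) ^ p = ((1/2:ℝ)) ^ p := rfl
        _ ≤ ((cdfI μ 0 * t ^ p + (1 - cdfI μ 0) * (1 - t) ^ p) ^ (1/p)) ^ p :=
            Real.rpow_le_rpow (by norm_num) hr hp0.le
        _ = cdfI μ 0 * t ^ p + (1 - cdfI μ 0) * (1 - t) ^ p :=
            rpow_inv_roundtrip hp0 hXnn
    have ha : cdfI μ 0 = 1/2 :=
      localmin_half hp (cdfI_nonneg μ 0) (cdfI_le_one hμ 0) hbound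
    have h0 : μ {0} = 1/2 := by
      have hA : (μ {0}).toReal = 1/2 := by rw [← Icc_self (0:ℝ)]; exact ha
      have := ENNReal.ofReal_toReal (measure_ne_top μ {0})
      rw [hA] at this
      rw [← this]
      rw [ENNReal.ofReal_div_of_pos (by norm_num)]
      norm_num
    exact measure_eq hμ hm h0
  · -- backward direction
    intro h
    subst h
    refine sInf_value hp hμ ?_ ?_
    · simp [Measure.dirac_apply' _ measurableSet_Ioo]
    · rw [cdfI, Icc_self]
      rw [Measure.add_apply, Measure.smul_apply, Measure.smul_apply,
        Measure.dirac_apply' _ (measurableSet_singleton _),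
        Measure.dirac_apply' _ (measurableSet_singleton _)]
      simp
end
end

section
/- For p > 1, every isometric embedding of W_p([0,1]) into itself is surjective, and the only isometric embeddings are the identity and the push-forward r_# of the reflection r(x) = 1−x; hence Isom(W_p([0,1])) ≅ C₂. -/
open MeasureTheory Set

noncomputable section

namespace WpAux

open Filter Topology intervalIntegral
open scoped ENNReal

variable {μ ν : Measure ℝ} {p s t u x y : ℝ}

theorem P01.prob (hμ : μ ∈ P01) : IsProbabilityMeasure μ := hμ.1

theorem cdf_nonneg (μ : Measure ℝ) (x : ℝ) : 0 ≤ cdfI μ x := ENNReal.toReal_nonneg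

theorem cdf_mono (hμ : μ ∈ P01) : Monotone (cdfI μ) := by
  haveI := hμ.1
  intro a b hab
  exact ENNReal.toReal_mono (measure_ne_top μ _) (measure_mono (Icc_subset_Icc_right hab))

theorem cdf_le_one (hμ : μ ∈ P01) : cdfI μ x ≤ 1 := by
  haveI := hμ.1
  have : μ (Icc 0 x) ≤ 1 := prob_le_one
  simpa [cdfI] using ENNReal.toReal_mono (by simp) this

theorem cdf_neg (μ : Measure ℝ) (hx : x < 0) : cdfI μ x = 0 := by
  simp [cdfI, Icc_eq_empty (by linarith : ¬ (0:ℝ) ≤ x)]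

theorem cdf_one (hμ : μ ∈ P01) (hx : 1 ≤ x) : cdfI μ x = 1 := by
  haveI := hμ.1
  have h1 : μ (Icc 0 x) ≤ 1 := prob_le_one
  have h2 : (1:ℝ≥0∞) ≤ μ (Icc 0 x) := by
    rw [← hμ.2]; exact measure_mono (Icc_subset_Icc_right hx)
  have : μ (Icc 0 x) = 1 := le_antisymm h1 h2
  simp [cdfI, this]

theorem measure_Iio_zero (hμ : μ ∈ P01) : μ (Iio 0) = 0 := by
  haveI := hμ.1
  have hc : μ (Icc 0 1)ᶜ = 0 := by
    have := measure_compl (measurableSet_Icc (a := (0:ℝ)) (b := 1)) (measure_ne_top μ _)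
    rw [this, hμ.2, measure_univ, tsub_self]
  exact measure_mono_null (fun z hz => by simp at hz ⊢; intro h; linarith) hc

theorem measure_Ioi_one (hμ : μ ∈ P01) : μ (Ioi 1) = 0 := by
  haveI := hμ.1
  have hc : μ (Icc 0 1)ᶜ = 0 := by
    have := measure_compl (measurableSet_Icc (a := (0:ℝ)) (b := 1)) (measure_ne_top μ _)
    rw [this, hμ.2, measure_univ, tsub_self]
  exact measure_mono_null (fun z hz => by simp at hz ⊢; intro h; linarith) hc

theorem Ioc_toReal (hμ : μ ∈ P01) (x : ℝ) : (μ (Ioc x 1)).toReal = 1 - cdfI μ x := by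
  haveI := hμ.1
  rcases lt_or_ge x 0 with hx | hx
  · have h1 : μ (Ioc x 1) = 1 := by
      refine le_antisymm prob_le_one ?_
      rw [← hμ.2]
      exact measure_mono (fun z hz => ⟨lt_of_lt_of_le hx hz.1, hz.2⟩)
    rw [h1, cdf_neg μ hx]; simp
  · rcases le_or_gt x 1 with hx1 | hx1
    · have hsplit : μ (Icc 0 x) + μ (Ioc x 1) = 1 := by
        rw [← measure_union (Set.disjoint_left.mpr (fun z hz1 hz2 => absurd hz1.2 (not_le.mpr hz2.1))) measurableSet_Ioc,
          Set.Icc_union_Ioc_eq_Icc hx hx1, hμ.2]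
      have := congrArg ENNReal.toReal hsplit
      rw [ENNReal.toReal_add (measure_ne_top μ _) (measure_ne_top μ _)] at this
      simp only [ENNReal.toReal_one] at this
      simp only [cdfI]; linarith
    · rw [Set.Ioc_eq_empty (by linarith), cdf_one hμ (le_of_lt hx1)]; simp

theorem cdf_rc (hμ : μ ∈ P01) (x : ℝ) {ε : ℝ} (hε : 0 < ε) :
    ∃ y, x < y ∧ cdfI μ y < cdfI μ x + ε := by
  haveI := hμ.1
  have hmono : Antitone (fun n : ℕ => Icc (0:ℝ) (x + 1/(n+1))) := by
    intro m n hmn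
    apply Icc_subset_Icc_right
    have h1 : (1:ℝ)/(n+1) ≤ 1/(m+1) := by
      apply one_div_le_one_div_of_le
      · positivity
      · exact_mod_cast Nat.succ_le_succ hmn
    linarith
  have hiInter : ⋂ n : ℕ, Icc (0:ℝ) (x + 1/(n+1)) = Icc 0 x := by
    ext z
    simp only [mem_iInter, mem_Icc]
    constructor
    · rintro h
      refine ⟨(h 0).1, ?_⟩
      by_contra hz
      push_neg at hz
      obtain ⟨n, hn⟩ := exists_nat_one_div_lt (show (0:ℝ) < z - x by linarith)
      have := (h n).2
      linarith
    · rintro ⟨h0, hz⟩ n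
      have : (0:ℝ) < 1/(n+1) := by positivity
      exact ⟨h0, by linarith⟩
  have htend : Tendsto (fun n : ℕ => μ (Icc (0:ℝ) (x + 1/(n+1)))) atTop (𝓝 (μ (Icc 0 x))) := by
    have := MeasureTheory.tendsto_measure_iInter_atTop
      (μ := μ) (s := fun n : ℕ => Icc (0:ℝ) (x + 1/(n+1)))
      (fun n => (measurableSet_Icc).nullMeasurableSet) hmono ⟨0, measure_ne_top μ _⟩
    rwa [hiInter] at this
  have htoReal : Tendsto (fun n : ℕ => cdfI μ (x + 1/(n+1))) atTop (𝓝 (cdfI μ x)) :=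
    (ENNReal.tendsto_toReal (measure_ne_top μ _)).comp htend
  have : ∀ᶠ n : ℕ in atTop, cdfI μ (x + 1/(n+1)) < cdfI μ x + ε :=
    htoReal.eventually_lt_const (by linarith)
  obtain ⟨n, hn⟩ := this.exists
  have hpos : (0:ℝ) < 1/(n+1) := by positivity
  exact ⟨x + 1/(n+1), by linarith, hn⟩


/-! ### Quantile basics -/

theorem qset_nonempty (hμ : μ ∈ P01) (ht : 0 ≤ t) : {x : ℝ | cdfI μ x ≤ t}.Nonempty :=
  ⟨-1, by simpa [cdf_neg μ (by norm_num : (-1:ℝ) < 0)] using ht⟩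

theorem qset_bdd (hμ : μ ∈ P01) (ht : t < 1) : BddAbove {x : ℝ | cdfI μ x ≤ t} := by
  refine ⟨1, fun z hz => ?_⟩
  by_contra h
  push_neg at h
  have := cdf_one hμ (le_of_lt h)
  simp only [mem_setOf_eq] at hz
  linarith

theorem quant_le_of_lt_cdf (hμ : μ ∈ P01) (ht : 0 ≤ t) (h : t < cdfI μ x) :
    quantI μ t ≤ x := by
  refine csSup_le (qset_nonempty hμ ht) (fun z hz => ?_)
  simp only [mem_setOf_eq] at hz
  by_contra hzx
  push_neg at hzx
  exact absurd (cdf_mono hμ (le_of_lt hzx)) (by linarith)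

theorem le_cdf_of_quant_le (hμ : μ ∈ P01) (ht : 0 ≤ t) (ht1 : t < 1)
    (h : quantI μ t ≤ x) : t ≤ cdfI μ x := by
  by_contra hc
  push_neg at hc
  obtain ⟨y, hxy, hy⟩ := cdf_rc hμ x (show 0 < t - cdfI μ x by linarith)
  have hymem : y ∈ {z : ℝ | cdfI μ z ≤ t} := by simp only [mem_setOf_eq]; linarith
  have := le_csSup (qset_bdd hμ ht1) hymem
  have : y ≤ x := le_trans this h
  linarith

theorem quant_nonneg (hμ : μ ∈ P01) (ht : 0 ≤ t) : 0 ≤ quantI μ t := by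
  rcases lt_or_ge t 1 with ht1 | ht1
  · have hq : quantI μ t = sSup {x : ℝ | cdfI μ x ≤ t} := rfl
    refine le_of_forall_pos_le_add (fun ε hε => ?_)
    have hmem : -ε ∈ {x : ℝ | cdfI μ x ≤ t} := by
      simp only [mem_setOf_eq, cdf_neg μ (by linarith : -ε < (0:ℝ))]; exact ht
    have := le_csSup (qset_bdd hμ ht1) hmem
    rw [← hq] at this
    linarith
  · have huniv : {x : ℝ | cdfI μ x ≤ t} = univ := by
      ext z; simp only [mem_setOf_eq, mem_univ, iff_true]
      exact le_trans (cdf_le_one hμ) ht1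
    have : quantI μ t = 0 := by rw [quantI, huniv]; exact Real.sSup_univ
    linarith

theorem quant_le_one (hμ : μ ∈ P01) (ht : 0 ≤ t) (ht1 : t < 1) : quantI μ t ≤ 1 := by
  refine csSup_le (qset_nonempty hμ ht) (fun z hz => ?_)
  simp only [mem_setOf_eq] at hz
  by_contra h
  push_neg at h
  have := cdf_one hμ (le_of_lt h)
  linarith

theorem quant_mem (hμ : μ ∈ P01) (ht : t ∈ Ioo (0:ℝ) 1) : quantI μ t ∈ Icc (0:ℝ) 1 :=
  ⟨quant_nonneg hμ (le_of_lt ht.1), quant_le_one hμ (le_of_lt ht.1) ht.2⟩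

theorem quant_mono (hμ : μ ∈ P01) (ht : 0 ≤ t) (hu1 : u < 1) (htu : t ≤ u) :
    quantI μ t ≤ quantI μ u :=
  csSup_le_csSup (qset_bdd hμ hu1) (qset_nonempty hμ ht)
    (fun z hz => le_trans hz htu)

theorem quant_rc (hμ : μ ∈ P01) (ht : t ∈ Ioo (0:ℝ) 1) :
    Tendsto (quantI μ) (𝓝[>] t) (𝓝 (quantI μ t)) := by
  rw [Metric.tendsto_nhdsWithin_nhds]
  intro ε hε
  -- key claim: ∃ t' ∈ (t,1), quantI μ t' < quantI μ t + ε
  have key : ∃ t', t < t' ∧ t' < 1 ∧ quantI μ t' < quantI μ t + ε := by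
    by_contra h
    push_neg at h
    obtain ⟨x, hx⟩ : ∃ x : ℝ, x = quantI μ t + ε/2 := ⟨_, rfl⟩
    have hFle : ∀ t', t < t' → t' < 1 → cdfI μ x ≤ t' := by
      intro t' h1 h2
      have hlt : x < quantI μ t' := by
        have := h t' h1 h2
        linarith
      have hq : quantI μ t' = sSup {z : ℝ | cdfI μ z ≤ t'} := rfl
      rw [hq] at hlt
      obtain ⟨x', hx', hxx'⟩ := exists_lt_of_lt_csSup (qset_nonempty hμ (by linarith [ht.1])) hlt
      simp only [mem_setOf_eq] at hx'
      exact le_trans (cdf_mono hμ (le_of_lt hxx')) hx'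
    have hF : cdfI μ x ≤ t := by
      by_contra hF
      push_neg at hF
      obtain ⟨t', h1, h2⟩ := exists_between (lt_min hF ht.2)
      exact absurd (hFle t' h1 (lt_of_lt_of_le h2 (min_le_right _ _)))
        (not_le.mpr (lt_of_lt_of_le h2 (min_le_left _ _)))
    have hmem : x ∈ {z : ℝ | cdfI μ z ≤ t} := hF
    have h2 := le_csSup (qset_bdd hμ ht.2) hmem
    have hq : quantI μ t = sSup {z : ℝ | cdfI μ z ≤ t} := rfl
    rw [← hq] at h2
    linarith
  obtain ⟨t', htt', ht'1, ht'⟩ := key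
  refine ⟨t' - t, by linarith, fun z hz hdist => ?_⟩
  have hz1 : t < z := hz
  have hz2 : z < t' := by
    rw [Real.dist_eq, abs_of_pos (by linarith : (0:ℝ) < z - t)] at hdist
    linarith
  have hmono1 : quantI μ t ≤ quantI μ z := quant_mono hμ (le_of_lt ht.1) (by linarith) (le_of_lt hz1)
  have hmono2 : quantI μ z ≤ quantI μ t' := quant_mono hμ (by linarith [ht.1]) ht'1 (le_of_lt hz2)
  rw [Real.dist_eq, abs_of_nonneg (by linarith)]
  linarith


/-! ### Measurability and integrability -/

theorem quant_aemeas (hμ : μ ∈ P01) :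
    AEMeasurable (quantI μ) (volume.restrict (Ioo (0:ℝ) 1)) := by
  classical
  have hg : Monotone (fun t : ℝ => if t < 1 then quantI μ t else 1) := by
    intro a b hab
    by_cases ha : a < 1
    · by_cases hb : b < 1
      · simp only [if_pos ha, if_pos hb]
        rcases lt_or_ge a 0 with ha0 | ha0
        · have : quantI μ a = 0 := by
            rw [quantI]
            have : {x : ℝ | cdfI μ x ≤ a} = ∅ := by
              ext z
              simp only [mem_setOf_eq, mem_empty_iff_false, iff_false, not_le]
              exact lt_of_lt_of_le ha0 (cdf_nonneg μ z)
            rw [this]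
            exact Real.sSup_empty
          rw [this]
          rcases lt_or_ge b 0 with hb0 | hb0
          · have : quantI μ b = 0 := by
              rw [quantI]
              have : {x : ℝ | cdfI μ x ≤ b} = ∅ := by
                ext z
                simp only [mem_setOf_eq, mem_empty_iff_false, iff_false, not_le]
                exact lt_of_lt_of_le hb0 (cdf_nonneg μ z)
              rw [this]
              exact Real.sSup_empty
            rw [this]
          · exact quant_nonneg hμ hb0
        · exact quant_mono hμ ha0 hb hab
      · simp only [if_pos ha, if_neg hb]
        rcases lt_or_ge a 0 with ha0 | ha0
        · have : quantI μ a = 0 := by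
            rw [quantI]
            have : {x : ℝ | cdfI μ x ≤ a} = ∅ := by
              ext z
              simp only [mem_setOf_eq, mem_empty_iff_false, iff_false, not_le]
              exact lt_of_lt_of_le ha0 (cdf_nonneg μ z)
            rw [this]
            exact Real.sSup_empty
          rw [this]; norm_num
        · exact quant_le_one hμ ha0 ha
    · have hb : ¬ b < 1 := fun hb => ha (lt_of_le_of_lt hab hb)
      simp only [if_neg ha, if_neg hb, le_refl]
  refine AEMeasurable.congr (hg.measurable.aemeasurable) ?_
  rw [Filter.EventuallyEq, ae_restrict_iff' measurableSet_Ioo]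
  refine Filter.Eventually.of_forall (fun z hz => ?_)
  simp [if_pos hz.2]

theorem quant_aemeas_sub (hμ : μ ∈ P01) {a b : ℝ} (h0 : 0 ≤ a) (hb : b ≤ 1) :
    AEMeasurable (quantI μ) (volume.restrict (Ioo a b)) :=
  (quant_aemeas hμ).mono_measure (Measure.restrict_mono (Ioo_subset_Ioo h0 hb) le_rfl)

/-- Master integrability: continuous functions of two quantiles are interval integrable
on subintervals of `[0,1]`. -/
theorem intervalIntegrable_quant (hμ : μ ∈ P01) (hν : ν ∈ P01) {F : ℝ → ℝ → ℝ}
    (hF : Continuous fun z : ℝ × ℝ => F z.1 z.2) {a b : ℝ}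
    (h0 : 0 ≤ a) (hb : b ≤ 1) (hab : a ≤ b) :
    IntervalIntegrable (fun t => F (quantI μ t) (quantI ν t)) volume a b := by
  rw [intervalIntegrable_iff_integrableOn_Ioo_of_le hab]
  have hmeas : AEMeasurable (fun t => F (quantI μ t) (quantI ν t))
      (volume.restrict (Ioo a b)) :=
    hF.measurable.comp_aemeasurable
      ((quant_aemeas_sub hμ h0 hb).prodMk (quant_aemeas_sub hν h0 hb))
  obtain ⟨C, hC⟩ := (isCompact_Icc.prod isCompact_Icc).exists_bound_of_continuousOn
    (s := Icc (0:ℝ) 1 ×ˢ Icc (0:ℝ) 1) hF.continuousOn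
  refine Integrable.mono' (integrable_const C) hmeas.aestronglyMeasurable ?_
  rw [ae_restrict_iff' measurableSet_Ioo]
  refine Filter.Eventually.of_forall (fun z hz => ?_)
  have hz01 : z ∈ Ioo (0:ℝ) 1 := ⟨lt_of_le_of_lt h0 hz.1, lt_of_lt_of_le hz.2 hb⟩
  exact hC (quantI μ z, quantI ν z) ⟨quant_mem hμ hz01, quant_mem hν hz01⟩

/-! ### Recovery of the measure from the quantile function -/

theorem vol_quant_le (hμ : μ ∈ P01) (x : ℝ) :
    volume {t : ℝ | t ∈ Ioo (0:ℝ) 1 ∧ quantI μ t ≤ x} = ENNReal.ofReal (cdfI μ x) := by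
  have hsub1 : Ioo (0:ℝ) (cdfI μ x) ⊆ {t : ℝ | t ∈ Ioo (0:ℝ) 1 ∧ quantI μ t ≤ x} := by
    intro z hz
    have hz1 : z < 1 := lt_of_lt_of_le hz.2 (cdf_le_one hμ)
    exact ⟨⟨hz.1, hz1⟩, quant_le_of_lt_cdf hμ (le_of_lt hz.1) hz.2⟩
  have hsub2 : {t : ℝ | t ∈ Ioo (0:ℝ) 1 ∧ quantI μ t ≤ x} ⊆ Ioc (0:ℝ) (cdfI μ x) := by
    intro z hz
    exact ⟨hz.1.1, le_cdf_of_quant_le hμ (le_of_lt hz.1.1) hz.1.2 hz.2⟩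
  have h1 := measure_mono (μ := (volume : Measure ℝ)) hsub1
  have h2 := measure_mono (μ := (volume : Measure ℝ)) hsub2
  rw [Real.volume_Ioo, sub_zero] at h1
  rw [Real.volume_Ioc, sub_zero] at h2
  exact le_antisymm h2 h1

/-- Master injectivity: measures in `P01` with a.e. equal quantile functions coincide. -/
theorem meas_eq_of_quant_ae (hμ : μ ∈ P01) (hν : ν ∈ P01)
    (h : quantI μ =ᶠ[ae (volume.restrict (Ioo (0:ℝ) 1))] quantI ν) : μ = ν := by
  haveI := hμ.1
  haveI := hν.1
  have hae : ∀ᵐ z ∂(volume : Measure ℝ), z ∈ Ioo (0:ℝ) 1 → quantI μ z = quantI ν z := by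
    rw [← ae_restrict_iff' measurableSet_Ioo]
    exact h
  have hcdf : ∀ x, cdfI μ x = cdfI ν x := by
    intro x
    have hN : volume {z : ℝ | ¬ (z ∈ Ioo (0:ℝ) 1 → quantI μ z = quantI ν z)} = 0 :=
      ae_iff.mp hae
    have key : ∀ (q1 q2 : ℝ → ℝ),
        volume {z : ℝ | ¬ (z ∈ Ioo (0:ℝ) 1 → q1 z = q2 z)} = 0 →
        volume {t : ℝ | t ∈ Ioo (0:ℝ) 1 ∧ q1 t ≤ x}
          ≤ volume {t : ℝ | t ∈ Ioo (0:ℝ) 1 ∧ q2 t ≤ x} := by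
      intro q1 q2 hq
      have hsub : {t : ℝ | t ∈ Ioo (0:ℝ) 1 ∧ q1 t ≤ x}
          ⊆ {t : ℝ | t ∈ Ioo (0:ℝ) 1 ∧ q2 t ≤ x}
            ∪ {z : ℝ | ¬ (z ∈ Ioo (0:ℝ) 1 → q1 z = q2 z)} := by
        intro z hz
        by_cases heq : z ∈ Ioo (0:ℝ) 1 → q1 z = q2 z
        · exact Or.inl ⟨hz.1, by rw [← heq hz.1]; exact hz.2⟩
        · exact Or.inr heq
      calc volume {t : ℝ | t ∈ Ioo (0:ℝ) 1 ∧ q1 t ≤ x}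
          ≤ volume ({t : ℝ | t ∈ Ioo (0:ℝ) 1 ∧ q2 t ≤ x}
            ∪ {z : ℝ | ¬ (z ∈ Ioo (0:ℝ) 1 → q1 z = q2 z)}) := measure_mono hsub
        _ ≤ volume {t : ℝ | t ∈ Ioo (0:ℝ) 1 ∧ q2 t ≤ x}
            + volume {z : ℝ | ¬ (z ∈ Ioo (0:ℝ) 1 → q1 z = q2 z)} := measure_union_le _ _
        _ = volume {t : ℝ | t ∈ Ioo (0:ℝ) 1 ∧ q2 t ≤ x} := by rw [hq, add_zero]
    have hN' : volume {z : ℝ | ¬ (z ∈ Ioo (0:ℝ) 1 → quantI ν z = quantI μ z)} = 0 := by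
      refine measure_mono_null (fun z hz => ?_) hN
      simp only [mem_setOf_eq, Classical.not_imp] at hz ⊢
      exact ⟨hz.1, fun h => hz.2 h.symm⟩
    have : volume {t : ℝ | t ∈ Ioo (0:ℝ) 1 ∧ quantI μ t ≤ x}
        = volume {t : ℝ | t ∈ Ioo (0:ℝ) 1 ∧ quantI ν t ≤ x} :=
      le_antisymm (key _ _ hN) (key _ _ hN')
    rw [vol_quant_le hμ, vol_quant_le hν] at this
    exact (ENNReal.ofReal_eq_ofReal_iff (cdf_nonneg μ x) (cdf_nonneg ν x)).mp this
  refine Measure.ext_of_Iic μ ν (fun a => ?_)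
  rcases lt_or_ge a 0 with ha | ha
  · have hμ0 : μ (Iic a) = 0 :=
      measure_mono_null (fun z (hz : z ≤ a) => lt_of_le_of_lt hz ha) (measure_Iio_zero hμ)
    have hν0 : ν (Iic a) = 0 :=
      measure_mono_null (fun z (hz : z ≤ a) => lt_of_le_of_lt hz ha) (measure_Iio_zero hν)
    rw [hμ0, hν0]
  · have key : ∀ (ρ : Measure ℝ), ρ ∈ P01 → ρ (Iic a) = ENNReal.ofReal (cdfI ρ a) := by
      intro ρ hρ
      haveI := hρ.1
      have h1 : ρ (Iic a) ≤ ρ (Icc 0 a) := by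
        have : ρ (Iic a) ≤ ρ (Iio 0 ∪ Icc 0 a) := by
          refine measure_mono (fun z (hz : z ≤ a) => ?_)
          rcases lt_or_ge z 0 with h | h
          · exact Or.inl h
          · exact Or.inr ⟨h, hz⟩
        refine le_trans this (le_trans (measure_union_le _ _) ?_)
        rw [measure_Iio_zero hρ, zero_add]
      have h2 : ρ (Icc 0 a) ≤ ρ (Iic a) := measure_mono (fun z hz => hz.2)
      have : ρ (Iic a) = ρ (Icc 0 a) := le_antisymm h1 h2
      rw [this, cdfI, ENNReal.ofReal_toReal (measure_ne_top ρ _)]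
    rw [key μ hμ, key ν hν, hcdf a]


/-! ### The segment of extreme measures  ν_s = s·δ₀ + (1-s)·δ₁ -/

def EE (s t : ℝ) : ℝ := if t < s then 0 else 1

def nuM (s : ℝ) : Measure ℝ :=
  ENNReal.ofReal s • Measure.dirac 0 + ENNReal.ofReal (1 - s) • Measure.dirac 1

theorem nuM_apply (s : ℝ) {A : Set ℝ} (hA : MeasurableSet A) :
    nuM s A = ENNReal.ofReal s * A.indicator 1 0 + ENNReal.ofReal (1-s) * A.indicator 1 1 := by
  rw [nuM, Measure.add_apply, Measure.smul_apply, Measure.smul_apply,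
    Measure.dirac_apply' _ hA, Measure.dirac_apply' _ hA, smul_eq_mul, smul_eq_mul]

theorem nuM_mem (hs : s ∈ Icc (0:ℝ) 1) : nuM s ∈ P01 := by
  have h1 : nuM s (Icc 0 1) = 1 := by
    rw [nuM_apply s measurableSet_Icc]
    rw [indicator_of_mem (by constructor <;> norm_num : (0:ℝ) ∈ Icc (0:ℝ) 1),
      indicator_of_mem (by constructor <;> norm_num : (1:ℝ) ∈ Icc (0:ℝ) 1)]
    simp only [Pi.one_apply, mul_one]
    rw [← ENNReal.ofReal_add hs.1 (by linarith [hs.2])]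
    norm_num
  refine ⟨⟨?_⟩, h1⟩
  rw [nuM_apply s MeasurableSet.univ]
  simp only [indicator_of_mem (mem_univ (0:ℝ)), indicator_of_mem (mem_univ (1:ℝ)),
    Pi.one_apply, mul_one]
  rw [← ENNReal.ofReal_add hs.1 (by linarith [hs.2])]
  norm_num

theorem cdf_nuM (hs : s ∈ Icc (0:ℝ) 1) (x : ℝ) :
    cdfI (nuM s) x = if x < 0 then 0 else if x < 1 then s else 1 := by
  rw [cdfI, nuM_apply s measurableSet_Icc]
  rcases lt_or_ge x 0 with hx | hx
  · rw [if_pos hx]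
    rw [indicator_of_notMem (fun h => absurd ((mem_Icc.mp h).2) (by linarith)),
      indicator_of_notMem (fun h => absurd ((mem_Icc.mp h).2) (by linarith))]
    simp
  · rw [if_neg (not_lt.mpr hx)]
    rcases lt_or_ge x 1 with hx1 | hx1
    · rw [if_pos hx1]
      rw [indicator_of_mem (by exact ⟨le_refl 0, hx⟩),
        indicator_of_notMem (fun h => absurd ((mem_Icc.mp h).2) (by linarith))]
      simp [ENNReal.toReal_ofReal hs.1]
    · rw [if_neg (not_lt.mpr hx1)]
      rw [indicator_of_mem (by exact ⟨le_refl 0, hx⟩),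
        indicator_of_mem (by exact ⟨by norm_num, hx1⟩)]
      simp only [Pi.one_apply, mul_one]
      rw [← ENNReal.ofReal_add hs.1 (by linarith [hs.2])]
      norm_num

theorem quant_nuM (hs : s ∈ Icc (0:ℝ) 1) (ht : t ∈ Ioo (0:ℝ) 1) :
    quantI (nuM s) t = EE s t := by
  rw [quantI, EE]
  rcases lt_or_ge t s with hts | hts
  · rw [if_pos hts]
    have hset : {x : ℝ | cdfI (nuM s) x ≤ t} = Iio 0 := by
      ext z
      simp only [mem_setOf_eq, mem_Iio, cdf_nuM hs]
      rcases lt_or_ge z 0 with hz | hz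
      · simp [if_pos hz, hz, le_of_lt ht.1]
      · rw [if_neg (not_lt.mpr hz)]
        rcases lt_or_ge z 1 with hz1 | hz1
        · simp [if_pos hz1, not_lt.mpr hz, not_le.mpr hts]
        · simp [if_neg (not_lt.mpr hz1), not_lt.mpr hz, not_le.mpr ht.2]
    rw [hset]
    exact csSup_Iio
  · rw [if_neg (not_lt.mpr hts)]
    have hset : {x : ℝ | cdfI (nuM s) x ≤ t} = Iio 1 := by
      ext z
      simp only [mem_setOf_eq, mem_Iio, cdf_nuM hs]
      rcases lt_or_ge z 0 with hz | hz
      · simp [if_pos hz, le_of_lt ht.1]; linarith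
      · rw [if_neg (not_lt.mpr hz)]
        rcases lt_or_ge z 1 with hz1 | hz1
        · simp [if_pos hz1, hz1, hts]
        · simp [if_neg (not_lt.mpr hz1), not_lt.mpr hz1, not_le.mpr ht.2]
    rw [hset]
    exact csSup_Iio


/-! ### rpow helpers -/

theorem continuous_rpow_const (hp : 0 ≤ p) : Continuous fun x : ℝ => x ^ p :=
  continuous_iff_continuousAt.mpr (fun x => Real.continuousAt_rpow_const x p (Or.inr hp))

theorem rpow_le_self {r : ℝ} (h0 : 0 ≤ r) (h1 : r ≤ 1) (hp : 1 < p) : r ^ p ≤ r := by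
  rcases eq_or_lt_of_le h0 with h | h
  · rw [← h, Real.zero_rpow (by positivity)]
  · rcases eq_or_lt_of_le h1 with h1' | h1'
    · rw [h1', Real.one_rpow]
    · calc r ^ p ≤ r ^ (1:ℝ) :=
        le_of_lt (Real.rpow_lt_rpow_of_exponent_gt h h1' hp)
      _ = r := Real.rpow_one r

theorem rpow_lt_self {r : ℝ} (h0 : 0 < r) (h1 : r < 1) (hp : 1 < p) : r ^ p < r := by
  calc r ^ p < r ^ (1:ℝ) := Real.rpow_lt_rpow_of_exponent_gt h0 h1 hp
    _ = r := Real.rpow_one r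

theorem dW_pow (hp : 1 < p) (μ ν : Measure ℝ) :
    dWpI p μ ν ^ p = ∫ t in (0:ℝ)..1, |quantI μ t - quantI ν t| ^ p := by
  have hnn : 0 ≤ ∫ t in (0:ℝ)..1, |quantI μ t - quantI ν t| ^ p :=
    intervalIntegral.integral_nonneg (by norm_num)
      (fun u _ => Real.rpow_nonneg (abs_nonneg _) p)
  rw [dWpI, ← Real.rpow_mul hnn, one_div_mul_cancel (by linarith : p ≠ 0), Real.rpow_one]

theorem dW_pow_eq_of_eq (hp : 1 < p) {μ' ν' : Measure ℝ}
    (h : dWpI p μ ν = dWpI p μ' ν') :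
    ∫ t in (0:ℝ)..1, |quantI μ t - quantI ν t| ^ p
      = ∫ t in (0:ℝ)..1, |quantI μ' t - quantI ν' t| ^ p := by
  rw [← dW_pow hp, ← dW_pow hp, h]

/-! ### Distances within the ν family -/

theorem ae_of_null {N : Set ℝ} (hN : volume N = 0) {P : ℝ → Prop}
    (h : ∀ z, z ∉ N → P z) : ∀ᵐ z ∂(volume : Measure ℝ), P z := by
  rw [ae_iff]
  exact measure_mono_null (fun z hz => by by_contra hzN; exact hz (h z hzN)) hN

theorem dist_nu_aux (hp : 1 < p) {c c' : ℝ} (hc : c ∈ Icc (0:ℝ) 1) (hc' : c' ∈ Icc (0:ℝ) 1)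
    (hcc : c' ≤ c) :
    (∫ t in (0:ℝ)..1, |quantI (nuM c) t - quantI (nuM c') t| ^ p) = c - c' := by
  have hnull : volume (({1, c, c'} : Set ℝ)) = 0 :=
    Set.Countable.measure_zero (Set.Countable.insert _ (Set.Countable.insert _
      (Set.countable_singleton _))) _
  have hcong : ∀ᵐ z ∂(volume : Measure ℝ), z ∈ Set.uIoc (0:ℝ) 1 →
      |quantI (nuM c) z - quantI (nuM c') z| ^ p
        = (Ioc c' c).indicator (fun _ => (1:ℝ)) z := by
    refine ae_of_null hnull (fun z hz hzI => ?_)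
    simp only [mem_insert_iff, mem_singleton_iff, not_or] at hz
    rw [Set.uIoc_of_le (by norm_num : (0:ℝ) ≤ 1)] at hzI
    have hz01 : z ∈ Ioo (0:ℝ) 1 := ⟨hzI.1, lt_of_le_of_ne hzI.2 hz.1⟩
    rw [quant_nuM hc hz01, quant_nuM hc' hz01, EE, EE]
    rcases lt_or_ge z c' with h1 | h1
    · have h2 : z < c := lt_of_lt_of_le h1 hcc
      rw [if_pos h2, if_pos h1, Set.indicator_of_notMem (fun hm => absurd hm.1 (not_lt.mpr (le_of_lt h1)))]
      simp [Real.zero_rpow (by positivity : p ≠ 0)]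
    · have h1' : c' < z := lt_of_le_of_ne h1 (Ne.symm hz.2.2)
      rcases lt_or_ge z c with h2 | h2
      · rw [if_pos h2, if_neg (not_lt.mpr h1),
          Set.indicator_of_mem (show z ∈ Ioc c' c from ⟨h1', le_of_lt h2⟩)]
        simp [Real.one_rpow]
      · rw [if_neg (not_lt.mpr h2), if_neg (not_lt.mpr h1),
          Set.indicator_of_notMem (fun hm => absurd hm.2 (not_le.mpr (lt_of_le_of_ne h2 (Ne.symm hz.2.1))))]
        simp [Real.zero_rpow (by positivity : p ≠ 0)]
  rw [intervalIntegral.integral_congr_ae hcong,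
    intervalIntegral.integral_of_le (by norm_num : (0:ℝ) ≤ 1),
    MeasureTheory.setIntegral_indicator measurableSet_Ioc]
  have hinter : Ioc (0:ℝ) 1 ∩ Ioc c' c = Ioc c' c :=
    inter_eq_self_of_subset_right (Ioc_subset_Ioc hc'.1 hc.2)
  rw [hinter, MeasureTheory.setIntegral_const, Real.volume_real_Ioc_of_le hcc, smul_eq_mul, mul_one]

theorem dist_nu (hp : 1 < p) {c c' : ℝ} (hc : c ∈ Icc (0:ℝ) 1) (hc' : c' ∈ Icc (0:ℝ) 1) :
    (∫ t in (0:ℝ)..1, |quantI (nuM c) t - quantI (nuM c') t| ^ p) = |c - c'| := by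
  rcases le_total c' c with h | h
  · rw [dist_nu_aux hp hc hc' h, abs_of_nonneg (by linarith)]
  · have := dist_nu_aux hp hc' hc h
    rw [abs_of_nonpos (by linarith), neg_sub, ← this]
    refine intervalIntegral.integral_congr (fun z _ => ?_)
    rw [abs_sub_comm]


/-! ### Splitting the distance to ν_s -/

variable {η : Measure ℝ}

theorem W_split (hp : 1 < p) (hη : η ∈ P01) (hs : s ∈ Icc (0:ℝ) 1) :
    (∫ t in (0:ℝ)..1, |quantI η t - quantI (nuM s) t| ^ p)
      = (∫ t in (0:ℝ)..s, (quantI η t) ^ p) + ∫ t in s..1, (1 - quantI η t) ^ p := by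
  have hp0 : (0:ℝ) ≤ p := by linarith
  have hFc : Continuous fun z : ℝ × ℝ => |z.1 - z.2| ^ p :=
    (continuous_rpow_const hp0).comp ((continuous_fst.sub continuous_snd).abs)
  have h1 : IntervalIntegrable (fun t => |quantI η t - quantI (nuM s) t| ^ p) volume 0 s :=
    intervalIntegrable_quant hη (nuM_mem hs) (F := fun a b => |a - b| ^ p) hFc (le_refl 0) hs.2 hs.1
  have h2 : IntervalIntegrable (fun t => |quantI η t - quantI (nuM s) t| ^ p) volume s 1 :=
    intervalIntegrable_quant hη (nuM_mem hs) (F := fun a b => |a - b| ^ p) hFc hs.1 (le_refl 1) hs.2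
  rw [← intervalIntegral.integral_add_adjacent_intervals h1 h2]
  have hnull : volume (({1, s} : Set ℝ)) = 0 :=
    Set.Countable.measure_zero (Set.Countable.insert _ (Set.countable_singleton _)) _
  congr 1
  · refine intervalIntegral.integral_congr_ae (ae_of_null hnull (fun z hz hzI => ?_))
    simp only [mem_insert_iff, mem_singleton_iff, not_or] at hz
    rw [Set.uIoc_of_le hs.1] at hzI
    have hzs : z < s := lt_of_le_of_ne hzI.2 hz.2
    have hz01 : z ∈ Ioo (0:ℝ) 1 := ⟨hzI.1, lt_of_lt_of_le hzs hs.2⟩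
    rw [quant_nuM hs hz01, EE, if_pos hzs, sub_zero,
      abs_of_nonneg (quant_nonneg hη (le_of_lt hz01.1))]
  · refine intervalIntegral.integral_congr_ae (ae_of_null hnull (fun z hz hzI => ?_))
    simp only [mem_insert_iff, mem_singleton_iff, not_or] at hz
    rw [Set.uIoc_of_le hs.2] at hzI
    have hz01 : z ∈ Ioo (0:ℝ) 1 :=
      ⟨lt_of_le_of_lt hs.1 hzI.1, lt_of_le_of_ne hzI.2 hz.1⟩
    rw [quant_nuM hs hz01, EE, if_neg (not_lt.mpr (le_of_lt hzI.1)), abs_sub_comm,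
      abs_of_nonneg (by linarith [quant_le_one hη (le_of_lt hz01.1) hz01.2])]

theorem W_primitive (hp : 1 < p) (hη : η ∈ P01) (hs : s ∈ Icc (0:ℝ) 1) :
    (∫ t in (0:ℝ)..1, |quantI η t - quantI (nuM s) t| ^ p)
      - (∫ t in (0:ℝ)..1, |quantI η t - quantI (nuM 0) t| ^ p)
      = ∫ t in (0:ℝ)..s, ((quantI η t) ^ p - (1 - quantI η t) ^ p) := by
  have hp0 : (0:ℝ) ≤ p := by linarith
  have hc1 : Continuous fun z : ℝ × ℝ => (z.1) ^ p :=
    (continuous_rpow_const hp0).comp continuous_fst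
  have hc2 : Continuous fun z : ℝ × ℝ => (1 - z.1) ^ p :=
    (continuous_rpow_const hp0).comp (continuous_const.sub continuous_fst)
  have hI1 : IntervalIntegrable (fun t => (quantI η t) ^ p) volume 0 s :=
    intervalIntegrable_quant hη hη (F := fun a _ => a ^ p) hc1 (le_refl 0) hs.2 hs.1
  have hI2a : IntervalIntegrable (fun t => (1 - quantI η t) ^ p) volume 0 s :=
    intervalIntegrable_quant hη hη (F := fun a _ => (1 - a) ^ p) hc2 (le_refl 0) hs.2 hs.1
  have hI2b : IntervalIntegrable (fun t => (1 - quantI η t) ^ p) volume s 1 :=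
    intervalIntegrable_quant hη hη (F := fun a _ => (1 - a) ^ p) hc2 hs.1 (le_refl 1) hs.2
  rw [W_split hp hη hs, W_split hp hη ⟨le_refl 0, zero_le_one⟩,
    intervalIntegral.integral_same,
    ← intervalIntegral.integral_add_adjacent_intervals hI2a hI2b,
    intervalIntegral.integral_sub hI1 hI2a]
  ring

/-! ### measures with  a.e. 0/1-valued quantile are in the ν family -/

theorem exists_c (hη : η ∈ P01)
    (h01 : ∀ᵐ t ∂(volume.restrict (Ioo (0:ℝ) 1)), quantI η t = 0 ∨ quantI η t = 1) :
    ∃ c ∈ Icc (0:ℝ) 1, η = nuM c := by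
  classical
  obtain ⟨A, hA⟩ : ∃ A : Set ℝ, A = {t : ℝ | t ∈ Ioo (0:ℝ) 1 ∧ 1 ≤ quantI η t} := ⟨_, rfl⟩
  obtain ⟨c, hc⟩ : ∃ c : ℝ, c = sInf (insert 1 A) := ⟨_, rfl⟩
  have hbdd : BddBelow (insert (1:ℝ) A) := by
    refine ⟨0, fun b hb => ?_⟩
    rcases hb with hb | hb
    · rw [hb]; norm_num
    · rw [hA] at hb; exact le_of_lt hb.1.1
  have hne : (insert (1:ℝ) A).Nonempty := insert_nonempty _ _
  have hc1 : c ≤ 1 := by rw [hc]; exact csInf_le hbdd (mem_insert _ _)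
  have hc0 : 0 ≤ c := by
    rw [hc]
    refine le_csInf hne (fun b hb => ?_)
    rcases hb with hb | hb
    · rw [hb]; norm_num
    · rw [hA] at hb; exact le_of_lt hb.1.1
  have claim1 : ∀ t ∈ Ioo (0:ℝ) 1, t < c → quantI η t < 1 := by
    intro t ht htc
    by_contra hq
    push_neg at hq
    have : t ∈ A := by rw [hA]; exact ⟨ht, hq⟩
    have := csInf_le hbdd (mem_insert_of_mem _ this)
    rw [← hc] at this
    linarith
  have claim2 : ∀ t ∈ Ioo (0:ℝ) 1, c < t → 1 ≤ quantI η t := by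
    intro t ht hct
    rw [hc] at hct
    obtain ⟨b, hb, hbt⟩ := exists_lt_of_csInf_lt hne hct
    rcases hb with hb | hb
    · rw [hb] at hbt; linarith [ht.2]
    · rw [hA] at hb
      exact le_trans hb.2 (quant_mono hη (le_of_lt hb.1.1) ht.2 (le_of_lt hbt))
  have haec : ∀ᵐ t ∂(volume.restrict (Ioo (0:ℝ) 1)), t ≠ c := by
    rw [ae_iff]
    refine measure_mono_null (fun z hz => ?_) (?_ : (volume.restrict (Ioo (0:ℝ) 1)) {c} = 0)
    · simp only [mem_setOf_eq, not_not] at hz; simp [hz]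
    · rw [Measure.restrict_apply (measurableSet_singleton c)]
      exact measure_mono_null (inter_subset_left) (measure_singleton c)
  have hfin : quantI η =ᶠ[ae (volume.restrict (Ioo (0:ℝ) 1))] quantI (nuM c) := by
    filter_upwards [h01, haec, ae_restrict_mem measurableSet_Ioo] with t hor hne' hmem
    rw [quant_nuM ⟨hc0, hc1⟩ hmem, EE]
    rcases lt_or_ge t c with htc | htc
    · rw [if_pos htc]
      rcases hor with h | h
      · exact h
      · exact absurd (claim1 t hmem htc) (by rw [h]; exact lt_irrefl 1)
    · have htc' : c < t := lt_of_le_of_ne htc (Ne.symm hne')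
      rw [if_neg (not_lt.mpr htc)]
      exact le_antisymm (quant_le_one hη (le_of_lt hmem.1) hmem.2) (claim2 t hmem htc')
  exact ⟨c, ⟨hc0, hc1⟩, meas_eq_of_quant_ae hη (nuM_mem ⟨hc0, hc1⟩) hfin⟩


theorem quant_ae01_of_sum (hp : 1 < p) (hη : η ∈ P01)
    (h : (∫ t in (0:ℝ)..1, (quantI η t) ^ p) + (∫ t in (0:ℝ)..1, (1 - quantI η t) ^ p) = 1) :
    ∀ᵐ t ∂(volume.restrict (Ioo (0:ℝ) 1)), quantI η t = 0 ∨ quantI η t = 1 := by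
  have hp0 : (0:ℝ) ≤ p := by linarith
  have hc1 : Continuous fun z : ℝ × ℝ => (z.1) ^ p :=
    (continuous_rpow_const hp0).comp continuous_fst
  have hc2 : Continuous fun z : ℝ × ℝ => (1 - z.1) ^ p :=
    (continuous_rpow_const hp0).comp (continuous_const.sub continuous_fst)
  have hI1 : IntervalIntegrable (fun t => (quantI η t) ^ p) volume 0 1 :=
    intervalIntegrable_quant hη hη (F := fun a _ => a ^ p) hc1 (le_refl 0) (le_refl 1) zero_le_one
  have hI2 : IntervalIntegrable (fun t => (1 - quantI η t) ^ p) volume 0 1 :=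
    intervalIntegrable_quant hη hη (F := fun a _ => (1 - a) ^ p) hc2 (le_refl 0) (le_refl 1) zero_le_one
  have hI3 : IntervalIntegrable (fun t => (quantI η t) ^ p + (1 - quantI η t) ^ p) volume 0 1 :=
    hI1.add hI2
  have hsum : ∫ t in (0:ℝ)..1, ((quantI η t) ^ p + (1 - quantI η t) ^ p) = 1 := by
    rw [intervalIntegral.integral_add hI1 hI2, h]
  have hzero : ∫ t in (0:ℝ)..1, (1 - ((quantI η t) ^ p + (1 - quantI η t) ^ p)) = 0 := by
    rw [intervalIntegral.integral_sub _root_.intervalIntegrable_const hI3, hsum]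
    simp
  rw [intervalIntegral.integral_of_le zero_le_one,
    MeasureTheory.integral_Ioc_eq_integral_Ioo] at hzero
  have hnonneg : 0 ≤ᶠ[ae (volume.restrict (Ioo (0:ℝ) 1))]
      fun t => (1 - ((quantI η t) ^ p + (1 - quantI η t) ^ p)) := by
    filter_upwards [ae_restrict_mem measurableSet_Ioo] with t hmem
    have hq := quant_mem hη hmem
    have h1 : (quantI η t) ^ p ≤ quantI η t := rpow_le_self hq.1 hq.2 hp
    have h2 : (1 - quantI η t) ^ p ≤ 1 - quantI η t :=
      rpow_le_self (by linarith [hq.2]) (by linarith [hq.1]) hp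
    simp only [Pi.zero_apply]
    linarith
  have hint : Integrable (fun t => (1 - ((quantI η t) ^ p + (1 - quantI η t) ^ p)))
      (volume.restrict (Ioo (0:ℝ) 1)) := by
    have := (_root_.intervalIntegrable_const (c := (1:ℝ)) (μ := volume) (a := (0:ℝ)) (b := 1)).sub hI3
    rwa [intervalIntegrable_iff_integrableOn_Ioo_of_le zero_le_one] at this
  have haezero := (MeasureTheory.integral_eq_zero_iff_of_nonneg_ae hnonneg hint).mp hzero
  filter_upwards [haezero, ae_restrict_mem measurableSet_Ioo] with t h0 hmem
  have hq := quant_mem hη hmem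
  simp only [Pi.zero_apply] at h0
  have heq : (quantI η t) ^ p + (1 - quantI η t) ^ p = 1 := by linarith
  by_contra hcon
  push_neg at hcon
  have hlt1 : 0 < quantI η t := lt_of_le_of_ne hq.1 (Ne.symm hcon.1)
  have hlt2 : quantI η t < 1 := lt_of_le_of_ne hq.2 hcon.2
  have h1 : (quantI η t) ^ p < quantI η t := rpow_lt_self hlt1 hlt2 hp
  have h2 : (1 - quantI η t) ^ p < 1 - quantI η t :=
    rpow_lt_self (by linarith) (by linarith) hp
  linarith

theorem eq_nu_of_dists (hp : 1 < p) (hη : η ∈ P01) (hs : s ∈ Icc (0:ℝ) 1)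
    (h1 : (∫ t in (0:ℝ)..1, |quantI η t - quantI (nuM 1) t| ^ p) = 1 - s)
    (h0 : (∫ t in (0:ℝ)..1, |quantI η t - quantI (nuM 0) t| ^ p) = s) :
    η = nuM s := by
  have hone : (1:ℝ) ∈ Icc (0:ℝ) 1 := ⟨zero_le_one, le_refl 1⟩
  have hzero : (0:ℝ) ∈ Icc (0:ℝ) 1 := ⟨le_refl 0, zero_le_one⟩
  have hq1 : (∫ t in (0:ℝ)..1, (quantI η t) ^ p) = 1 - s := by
    have := W_split hp hη hone
    rw [intervalIntegral.integral_same] at this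
    rw [← h1, this, add_zero]
  have hq0 : (∫ t in (0:ℝ)..1, (1 - quantI η t) ^ p) = s := by
    have := W_split hp hη hzero
    rw [intervalIntegral.integral_same] at this
    rw [← h0, this, zero_add]
  obtain ⟨c, hc, hcη⟩ := exists_c hη (quant_ae01_of_sum hp hη (by rw [hq1, hq0]; ring))
  have : (∫ t in (0:ℝ)..1, |quantI (nuM c) t - quantI (nuM 1) t| ^ p) = 1 - s := by
    rw [← hcη]; exact h1
  rw [dist_nu hp hc hone] at this
  have hcs : c = s := by
    rw [abs_of_nonpos (by linarith [hc.2])] at this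
    linarith
  rw [hcη, hcs]

theorem endpoints (hp : 1 < p) {X Y : Measure ℝ} (hX : X ∈ P01) (hY : Y ∈ P01)
    (h : (∫ t in (0:ℝ)..1, |quantI X t - quantI Y t| ^ p) = 1) :
    (X = nuM 1 ∧ Y = nuM 0) ∨ (X = nuM 0 ∧ Y = nuM 1) := by
  have hp0 : (0:ℝ) ≤ p := by linarith
  have hFc : Continuous fun z : ℝ × ℝ => |z.1 - z.2| ^ p :=
    (continuous_rpow_const hp0).comp ((continuous_fst.sub continuous_snd).abs)
  have hIa : IntervalIntegrable (fun t => |quantI X t - quantI Y t| ^ p) volume 0 1 :=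
    intervalIntegrable_quant hX hY (F := fun a b => |a - b| ^ p) hFc (le_refl 0) (le_refl 1) zero_le_one
  have hzero : ∫ t in (0:ℝ)..1, (1 - |quantI X t - quantI Y t| ^ p) = 0 := by
    rw [intervalIntegral.integral_sub _root_.intervalIntegrable_const hIa, h]
    simp
  rw [intervalIntegral.integral_of_le zero_le_one,
    MeasureTheory.integral_Ioc_eq_integral_Ioo] at hzero
  have hnonneg : 0 ≤ᶠ[ae (volume.restrict (Ioo (0:ℝ) 1))]
      fun t => (1 - |quantI X t - quantI Y t| ^ p) := by
    filter_upwards [ae_restrict_mem measurableSet_Ioo] with t hmem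
    have hqX := quant_mem hX hmem
    have hqY := quant_mem hY hmem
    have habs : |quantI X t - quantI Y t| ≤ 1 := by
      rw [abs_le]; constructor <;> [linarith [hqX.1, hqY.2]; linarith [hqX.2, hqY.1]]
    simp only [Pi.zero_apply]
    linarith [Real.rpow_le_one (abs_nonneg (quantI X t - quantI Y t)) habs hp0]
  have hint : Integrable (fun t => (1 - |quantI X t - quantI Y t| ^ p))
      (volume.restrict (Ioo (0:ℝ) 1)) := by
    have := (_root_.intervalIntegrable_const (c := (1:ℝ)) (μ := volume) (a := (0:ℝ)) (b := 1)).sub hIa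
    rwa [intervalIntegrable_iff_integrableOn_Ioo_of_le zero_le_one] at this
  have haeone := (MeasureTheory.integral_eq_zero_iff_of_nonneg_ae hnonneg hint).mp hzero
  have hdich : ∀ᵐ t ∂(volume.restrict (Ioo (0:ℝ) 1)),
      (quantI X t = 1 ∧ quantI Y t = 0) ∨ (quantI X t = 0 ∧ quantI Y t = 1) := by
    filter_upwards [haeone, ae_restrict_mem measurableSet_Ioo] with t h0 hmem
    have hqX := quant_mem hX hmem
    have hqY := quant_mem hY hmem
    simp only [Pi.zero_apply] at h0
    have hpow : |quantI X t - quantI Y t| ^ p = 1 := by linarith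
    have habs : |quantI X t - quantI Y t| = 1 := by
      by_contra hne
      have hle : |quantI X t - quantI Y t| ≤ 1 := by
        rw [abs_le]; constructor <;> [linarith [hqX.1, hqY.2]; linarith [hqX.2, hqY.1]]
      have hlt : |quantI X t - quantI Y t| < 1 := lt_of_le_of_ne hle hne
      rcases eq_or_lt_of_le (abs_nonneg (quantI X t - quantI Y t)) with h' | h'
      · rw [← h', Real.zero_rpow (by positivity)] at hpow; norm_num at hpow
      · have := rpow_lt_self h' hlt hp
        linarith
    rcases abs_eq (zero_le_one (α := ℝ)) |>.mp habs with h' | h'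
    · exact Or.inl ⟨by linarith [hqX.2, hqY.1], by linarith [hqX.2, hqY.1]⟩
    · exact Or.inr ⟨by linarith [hqX.1, hqY.2], by linarith [hqX.1, hqY.2]⟩
  obtain ⟨c, hc, hcX⟩ := exists_c hX (hdich.mono (fun t ht => by
    rcases ht with h' | h'
    · exact Or.inr h'.1
    · exact Or.inl h'.1))
  obtain ⟨c', hc', hcY⟩ := exists_c hY (hdich.mono (fun t ht => by
    rcases ht with h' | h'
    · exact Or.inl h'.2
    · exact Or.inr h'.2))
  rw [hcX, hcY, dist_nu hp hc hc'] at h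
  rcases abs_eq (zero_le_one (α := ℝ)) |>.mp h with h' | h'
  · have : c = 1 := by linarith [hc.2, hc'.1]
    have h2 : c' = 0 := by linarith [hc.2, hc'.1]
    exact Or.inl ⟨by rw [hcX, this], by rw [hcY, h2]⟩
  · have : c = 0 := by linarith [hc.1, hc'.2]
    have h2 : c' = 1 := by linarith [hc.1, hc'.2]
    exact Or.inr ⟨by rw [hcX, this], by rw [hcY, h2]⟩


/-! ### Functions with equal primitives agree at right-continuity points -/

theorem not_lt_of_primitive {f g : ℝ → ℝ}
    (hfI : IntervalIntegrable f volume 0 1) (hgI : IntervalIntegrable g volume 0 1)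
    (hprim : ∀ s ∈ Icc (0:ℝ) 1, (∫ z in (0:ℝ)..s, f z) = ∫ z in (0:ℝ)..s, g z)
    (ht : t ∈ Ioo (0:ℝ) 1)
    (hfrc : Tendsto f (𝓝[>] t) (𝓝 (f t))) (hgrc : Tendsto g (𝓝[>] t) (𝓝 (g t))) :
    ¬ g t < f t := by
  intro hlt
  have hc : 0 < f t - g t := by linarith
  have htend : Tendsto (fun u => f u - g u) (𝓝[>] t) (𝓝 (f t - g t)) := hfrc.sub hgrc
  have hev : ∀ᶠ u in 𝓝[>] t, (f t - g t)/2 < f u - g u :=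
    htend.eventually_const_lt (by linarith)
  obtain ⟨u, hu, hsub⟩ := mem_nhdsGT_iff_exists_Ioo_subset.mp hev
  obtain ⟨v, hv⟩ : ∃ v : ℝ, v = min u 1 := ⟨_, rfl⟩
  have htv : t < v := by rw [hv]; exact lt_min hu ht.2
  have hv1 : v ≤ 1 := by rw [hv]; exact min_le_right _ _
  have hvu : v ≤ u := by rw [hv]; exact min_le_left _ _
  have hmono : Set.uIcc t v ⊆ Set.uIcc (0:ℝ) 1 := by
    rw [Set.uIcc_of_le (le_of_lt htv), Set.uIcc_of_le zero_le_one]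
    exact Icc_subset_Icc (le_of_lt ht.1) hv1
  have hfI' : IntervalIntegrable f volume t v := hfI.mono_set hmono
  have hgI' : IntervalIntegrable g volume t v := hgI.mono_set hmono
  have hfI0 : IntervalIntegrable f volume 0 t := hfI.mono_set (by
    rw [Set.uIcc_of_le (le_of_lt ht.1), Set.uIcc_of_le zero_le_one]
    exact Icc_subset_Icc (le_refl 0) (le_of_lt ht.2))
  have hgI0 : IntervalIntegrable g volume 0 t := hgI.mono_set (by
    rw [Set.uIcc_of_le (le_of_lt ht.1), Set.uIcc_of_le zero_le_one]
    exact Icc_subset_Icc (le_refl 0) (le_of_lt ht.2))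
  have hzf : (∫ z in t..v, f z) = (∫ z in (0:ℝ)..v, f z) - ∫ z in (0:ℝ)..t, f z := by
    rw [← intervalIntegral.integral_add_adjacent_intervals hfI0 hfI']; ring
  have hzg : (∫ z in t..v, g z) = (∫ z in (0:ℝ)..v, g z) - ∫ z in (0:ℝ)..t, g z := by
    rw [← intervalIntegral.integral_add_adjacent_intervals hgI0 hgI']; ring
  have hzero : (∫ z in t..v, (f z - g z)) = 0 := by
    rw [intervalIntegral.integral_sub hfI' hgI', hzf, hzg,
      hprim v ⟨le_trans (le_of_lt ht.1) (le_of_lt htv), hv1⟩,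
      hprim t ⟨le_of_lt ht.1, le_of_lt ht.2⟩]
    ring
  have hIoo : (∫ z in t..v, (f z - g z)) = ∫ z in Ioo t v, (f z - g z) := by
    rw [intervalIntegral.integral_of_le (le_of_lt htv),
      MeasureTheory.integral_Ioc_eq_integral_Ioo]
  have hIntOn : IntegrableOn (fun z => f z - g z) (Ioo t v) volume := by
    have := hfI'.sub hgI'
    rwa [intervalIntegrable_iff_integrableOn_Ioo_of_le (le_of_lt htv)] at this
  have hlb := MeasureTheory.setIntegral_ge_of_const_le (μ := volume)
    (s := Ioo t v) (c := (f t - g t)/2) measurableSet_Ioo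
    (by rw [Real.volume_Ioo]; exact ENNReal.ofReal_ne_top)
    (fun x hx => le_of_lt (hsub ⟨hx.1, lt_of_lt_of_le hx.2 hvu⟩))
    hIntOn
  rw [← hIoo, hzero, Real.volume_real_Ioo_of_le (le_of_lt htv), smul_eq_mul] at hlb
  nlinarith

theorem eq_of_primitive {f g : ℝ → ℝ}
    (hfI : IntervalIntegrable f volume 0 1) (hgI : IntervalIntegrable g volume 0 1)
    (hprim : ∀ s ∈ Icc (0:ℝ) 1, (∫ z in (0:ℝ)..s, f z) = ∫ z in (0:ℝ)..s, g z)
    (ht : t ∈ Ioo (0:ℝ) 1)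
    (hfrc : Tendsto f (𝓝[>] t) (𝓝 (f t))) (hgrc : Tendsto g (𝓝[>] t) (𝓝 (g t))) :
    f t = g t :=
  le_antisymm
    (not_lt.mp (not_lt_of_primitive hfI hgI hprim ht hfrc hgrc))
    (not_lt.mp (not_lt_of_primitive (f := g) (g := f) hgI hfI
      (fun s hs => (hprim s hs).symm) ht hgrc hfrc))

/-- A measure in `P01` is determined by its distances to the family `ν_s`. -/
theorem eq_of_W_eq (hp : 1 < p) {η η' : Measure ℝ} (hη : η ∈ P01) (hη' : η' ∈ P01)
    (hW : ∀ s ∈ Icc (0:ℝ) 1,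
      (∫ t in (0:ℝ)..1, |quantI η t - quantI (nuM s) t| ^ p)
        = ∫ t in (0:ℝ)..1, |quantI η' t - quantI (nuM s) t| ^ p) :
    η = η' := by
  have hp0 : (0:ℝ) ≤ p := by linarith
  have hψc : Continuous fun r : ℝ => r ^ p - (1 - r) ^ p :=
    (continuous_rpow_const hp0).sub
      ((continuous_rpow_const hp0).comp (continuous_const.sub continuous_id))
  have hcF : Continuous fun z : ℝ × ℝ => (z.1) ^ p - (1 - z.1) ^ p :=
    hψc.comp continuous_fst
  have hfI : IntervalIntegrable (fun t => (quantI η t) ^ p - (1 - quantI η t) ^ p) volume 0 1 :=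
    intervalIntegrable_quant hη hη (F := fun a _ => a ^ p - (1 - a) ^ p) hcF
      (le_refl 0) (le_refl 1) zero_le_one
  have hgI : IntervalIntegrable (fun t => (quantI η' t) ^ p - (1 - quantI η' t) ^ p) volume 0 1 :=
    intervalIntegrable_quant hη' hη' (F := fun a _ => a ^ p - (1 - a) ^ p) hcF
      (le_refl 0) (le_refl 1) zero_le_one
  have hprim : ∀ s ∈ Icc (0:ℝ) 1,
      (∫ z in (0:ℝ)..s, ((quantI η z) ^ p - (1 - quantI η z) ^ p))
        = ∫ z in (0:ℝ)..s, ((quantI η' z) ^ p - (1 - quantI η' z) ^ p) := by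
    intro s hs
    rw [← W_primitive hp hη hs, ← W_primitive hp hη' hs,
      hW s hs, hW 0 ⟨le_refl 0, zero_le_one⟩]
  have hptwise : ∀ t ∈ Ioo (0:ℝ) 1, quantI η t = quantI η' t := by
    intro t ht
    have hfrc : Tendsto (fun z => (quantI η z) ^ p - (1 - quantI η z) ^ p) (𝓝[>] t)
        (𝓝 ((quantI η t) ^ p - (1 - quantI η t) ^ p)) :=
      (hψc.continuousAt.tendsto).comp (quant_rc hη ht)
    have hgrc : Tendsto (fun z => (quantI η' z) ^ p - (1 - quantI η' z) ^ p) (𝓝[>] t)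
        (𝓝 ((quantI η' t) ^ p - (1 - quantI η' t) ^ p)) :=
      (hψc.continuousAt.tendsto).comp (quant_rc hη' ht)
    have heq := eq_of_primitive hfI hgI hprim ht hfrc hgrc
    have hmem := quant_mem hη ht
    have hmem' := quant_mem hη' ht
    have hstrict : ∀ a b : ℝ, a ∈ Icc (0:ℝ) 1 → b ∈ Icc (0:ℝ) 1 → a < b →
        a ^ p - (1 - a) ^ p < b ^ p - (1 - b) ^ p := by
      intro a b ha hb hab
      have h1 : a ^ p < b ^ p := Real.rpow_lt_rpow ha.1 hab (by linarith)
      have h2 : (1 - b) ^ p ≤ (1 - a) ^ p :=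
        Real.rpow_le_rpow (by linarith [hb.2]) (by linarith) hp0
      linarith
    by_contra hne
    rcases lt_or_gt_of_ne hne with hlt | hlt
    · exact absurd heq (ne_of_lt (hstrict _ _ hmem hmem' hlt))
    · exact absurd heq.symm (ne_of_lt (hstrict _ _ hmem' hmem hlt))
  refine meas_eq_of_quant_ae hη hη' ?_
  filter_upwards [ae_restrict_mem measurableSet_Ioo] with t hmem
  exact hptwise t hmem


/-! ### Reflection -/

theorem Rmeas : Measurable fun x : ℝ => 1 - x := measurable_const.sub measurable_id

theorem R_mem (hμ : μ ∈ P01) : Measure.map (fun x => 1 - x) μ ∈ P01 := by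
  haveI := hμ.1
  refine ⟨Measure.isProbabilityMeasure_map Rmeas.aemeasurable, ?_⟩
  rw [Measure.map_apply Rmeas measurableSet_Icc]
  have : (fun x : ℝ => 1 - x) ⁻¹' (Icc 0 1) = Icc 0 1 := by
    ext z
    simp only [mem_preimage, mem_Icc]
    constructor <;> (intro h; constructor <;> linarith [h.1, h.2])
  rw [this, hμ.2]

theorem R_R (μ : Measure ℝ) :
    Measure.map (fun x : ℝ => 1 - x) (Measure.map (fun x : ℝ => 1 - x) μ) = μ := by
  rw [Measure.map_map Rmeas Rmeas]
  have : ((fun x : ℝ => 1 - x) ∘ (fun x : ℝ => 1 - x)) = id := by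
    funext z; simp [Function.comp]
  rw [this, Measure.map_id]

theorem cdf_R (μ : Measure ℝ) (x : ℝ) :
    cdfI (Measure.map (fun x => 1 - x) μ) x = (μ (Icc (1-x) 1)).toReal := by
  rw [cdfI, Measure.map_apply Rmeas measurableSet_Icc]
  have : (fun y : ℝ => 1 - y) ⁻¹' (Icc 0 x) = Icc (1-x) 1 := by
    ext z
    simp only [mem_preimage, mem_Icc]
    constructor <;> (intro h; constructor <;> linarith [h.1, h.2])
  rw [this]

def qmI (μ : Measure ℝ) (u : ℝ) : ℝ := sInf {x : ℝ | u ≤ cdfI μ x}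

theorem qmset_nonempty (hμ : μ ∈ P01) (hu : u ≤ 1) : {x : ℝ | u ≤ cdfI μ x}.Nonempty :=
  ⟨1, by simp only [mem_setOf_eq, cdf_one hμ (le_refl 1)]; exact hu⟩

theorem qmset_bdd (hμ : μ ∈ P01) (hu : 0 < u) : BddBelow {x : ℝ | u ≤ cdfI μ x} := by
  refine ⟨0, fun z hz => ?_⟩
  by_contra h
  push_neg at h
  simp only [mem_setOf_eq, cdf_neg μ h] at hz
  linarith

theorem sup_reflect {S : Set ℝ} (hne : S.Nonempty) (hbd : BddBelow S) :
    sSup {x : ℝ | 1 - x ∈ S} = 1 - sInf S := by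
  have hne' : {x : ℝ | 1 - x ∈ S}.Nonempty := by
    obtain ⟨y, hy⟩ := hne
    exact ⟨1 - y, by simp only [mem_setOf_eq, sub_sub_cancel]; exact hy⟩
  have hbd' : BddAbove {x : ℝ | 1 - x ∈ S} := by
    obtain ⟨b, hb⟩ := hbd
    exact ⟨1 - b, fun z hz => by have := hb hz; linarith⟩
  refine le_antisymm (csSup_le hne' (fun z hz => ?_)) ?_
  · have := csInf_le hbd hz
    linarith
  · refine le_of_forall_pos_le_add (fun ε hε => ?_)
    obtain ⟨y, hy, hy'⟩ := exists_lt_of_csInf_lt hne (show sInf S < sInf S + ε by linarith)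
    have hz : (1 - y) ∈ {x : ℝ | 1 - x ∈ S} := by
      simp only [mem_setOf_eq, sub_sub_cancel]; exact hy
    have := le_csSup hbd' hz
    linarith

theorem quant_R (hμ : μ ∈ P01) (ht : t ∈ Ioo (0:ℝ) 1) :
    quantI (Measure.map (fun x => 1 - x) μ) t = 1 - qmI μ (1 - t) := by
  haveI := hμ.1
  obtain ⟨A, hA⟩ : ∃ A : Set ℝ, A = {y : ℝ | (μ (Icc y 1)).toReal ≤ t} := ⟨_, rfl⟩
  have hAne : A.Nonempty := by
    refine ⟨2, ?_⟩
    rw [hA]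
    simp only [mem_setOf_eq, Set.Icc_eq_empty (by norm_num : ¬ (2:ℝ) ≤ 1)]
    simp [le_of_lt ht.1]
  have hAbd : BddBelow A := by
    refine ⟨0, fun y hy => ?_⟩
    rw [hA] at hy
    simp only [mem_setOf_eq] at hy
    by_contra h
    push_neg at h
    have h1 : (1:ℝ≥0∞) ≤ μ (Icc y 1) := by
      rw [← hμ.2]
      exact measure_mono (Icc_subset_Icc (le_of_lt h) (le_refl 1))
    have := ENNReal.toReal_mono (measure_ne_top μ _) h1
    simp only [ENNReal.toReal_one] at this
    linarith [ht.2]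
  have hset : {x : ℝ | cdfI (Measure.map (fun x => 1 - x) μ) x ≤ t} = {x : ℝ | 1 - x ∈ A} := by
    ext z
    simp only [mem_setOf_eq, cdf_R μ z, hA]
  have h1 : quantI (Measure.map (fun x => 1 - x) μ) t = 1 - sInf A := by
    rw [quantI, hset, sup_reflect hAne hAbd]
  have h2 : sInf A = qmI μ (1 - t) := by
    refine le_antisymm ?_ ?_
    · refine le_csInf (qmset_nonempty hμ (by linarith [ht.1])) (fun x hx => ?_)
      simp only [mem_setOf_eq] at hx
      refine le_of_forall_pos_le_add (fun ε hε => ?_)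
      refine csInf_le hAbd ?_
      rw [hA]
      simp only [mem_setOf_eq]
      have hsub : Icc (x + ε) 1 ⊆ Ioc x 1 := fun z hz => ⟨by linarith [hz.1], hz.2⟩
      have := ENNReal.toReal_mono (measure_ne_top μ _) (measure_mono hsub)
      rw [Ioc_toReal hμ x] at this
      linarith
    · refine csInf_le_csInf (qmset_bdd hμ (by linarith [ht.2])) hAne (fun y hy => ?_)
      rw [hA] at hy
      simp only [mem_setOf_eq] at hy ⊢
      have hsub : Ioc y 1 ⊆ Icc y 1 := fun z hz => ⟨le_of_lt hz.1, hz.2⟩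
      have := ENNReal.toReal_mono (measure_ne_top μ _) (measure_mono hsub)
      rw [Ioc_toReal hμ y] at this
      linarith
  rw [h1, h2]

theorem qm_le_quant (hμ : μ ∈ P01) (hu : u ∈ Ioo (0:ℝ) 1) : qmI μ u ≤ quantI μ u := by
  by_contra h
  push_neg at h
  obtain ⟨z, hz1, hz2⟩ := exists_between h
  have hq : quantI μ u = sSup {x : ℝ | cdfI μ x ≤ u} := rfl
  have h1 : ¬ cdfI μ z ≤ u := by
    intro hc
    have := le_csSup (qset_bdd hμ hu.2) (show z ∈ {x : ℝ | cdfI μ x ≤ u} from hc)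
    rw [← hq] at this
    linarith
  have h2 : ¬ u ≤ cdfI μ z := by
    intro hc
    have := csInf_le (qmset_bdd hμ hu.1) (show z ∈ {x : ℝ | u ≤ cdfI μ x} from hc)
    have h3 : qmI μ u ≤ z := this
    linarith
  push_neg at h1 h2
  linarith

theorem quant_le_qm (hμ : μ ∈ P01) (ht : t ∈ Ioo (0:ℝ) 1) (hu1 : u ≤ 1) (htu : t < u) :
    quantI μ t ≤ qmI μ u := by
  refine csSup_le (qset_nonempty hμ (le_of_lt ht.1)) (fun x hx => ?_)
  refine le_csInf (qmset_nonempty hμ hu1) (fun y hy => ?_)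
  simp only [mem_setOf_eq] at hx hy
  by_contra hc
  push_neg at hc
  have := cdf_mono hμ (le_of_lt hc)
  linarith

theorem qm_ae (hμ : μ ∈ P01) :
    ∀ᵐ z ∂(volume.restrict (Ioo (0:ℝ) 1)), qmI μ z = quantI μ z := by
  have hsub : {z : ℝ | z ∈ Ioo (0:ℝ) 1 ∧ qmI μ z ≠ quantI μ z}
      ⊆ ⋃ r : ℚ, {z : ℝ | z ∈ Ioo (0:ℝ) 1 ∧ qmI μ z < r ∧ (r:ℝ) < quantI μ z} := by
    intro z hz
    have hlt : qmI μ z < quantI μ z := lt_of_le_of_ne (qm_le_quant hμ hz.1) hz.2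
    obtain ⟨r, hr1, hr2⟩ := exists_rat_btwn hlt
    exact mem_iUnion.mpr ⟨r, hz.1, hr1, hr2⟩
  have hnull : volume {z : ℝ | z ∈ Ioo (0:ℝ) 1 ∧ qmI μ z ≠ quantI μ z} = 0 := by
    refine measure_mono_null hsub (measure_iUnion_null (fun r => ?_))
    refine Set.Countable.measure_zero (Set.Subsingleton.countable ?_) _
    intro z1 h1 z2 h2
    by_contra hne
    rcases lt_or_gt_of_ne hne with hlt | hlt
    · have := quant_le_qm hμ h1.1 (le_of_lt h2.1.2) hlt
      linarith [h1.2.2, h2.2.1]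
    · have := quant_le_qm hμ h2.1 (le_of_lt h1.1.2) hlt
      linarith [h2.2.2, h1.2.1]
  rw [ae_iff]
  rw [Measure.restrict_apply₀']
  · refine measure_mono_null (fun z hz => ?_) hnull
    simp only [mem_setOf_eq, mem_inter_iff] at hz
    exact ⟨hz.2, hz.1⟩
  · exact measurableSet_Ioo.nullMeasurableSet


theorem W_R (hp : 1 < p) (hμ : μ ∈ P01) (hs : s ∈ Icc (0:ℝ) 1) :
    (∫ t in (0:ℝ)..1, |quantI (Measure.map (fun x => 1 - x) μ) t - quantI (nuM s) t| ^ p)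
      = ∫ t in (0:ℝ)..1, |quantI μ t - quantI (nuM (1 - s)) t| ^ p := by
  have h1s : (1 - s) ∈ Icc (0:ℝ) 1 := ⟨by linarith [hs.2], by linarith [hs.1]⟩
  have hone : volume ({1} : Set ℝ) = 0 := measure_singleton 1
  have hqm : ∀ᵐ z ∂(volume : Measure ℝ), z ∈ Ioo (0:ℝ) 1 → qmI μ z = quantI μ z :=
    (ae_restrict_iff' measurableSet_Ioo).mp (qm_ae hμ)
  rw [W_split hp (R_mem hμ) hs, W_split hp hμ h1s]
  have pieceA : (∫ t in (0:ℝ)..s, (quantI (Measure.map (fun x => 1 - x) μ) t) ^ p)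
      = ∫ t in (1-s)..1, (1 - quantI μ t) ^ p := by
    have step1 : (∫ t in (0:ℝ)..s, (quantI (Measure.map (fun x => 1 - x) μ) t) ^ p)
        = ∫ t in (0:ℝ)..s, (fun u => (1 - qmI μ u) ^ p) (1 - t) := by
      refine intervalIntegral.integral_congr_ae (ae_of_null hone (fun z hz hzI => ?_))
      rw [Set.uIoc_of_le hs.1] at hzI
      have hz01 : z ∈ Ioo (0:ℝ) 1 :=
        ⟨hzI.1, lt_of_le_of_ne (le_trans hzI.2 hs.2) (fun h => hz (by simp [h]))⟩
      simp only
      rw [quant_R hμ hz01]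
    rw [step1, intervalIntegral.integral_comp_sub_left (fun u => (1 - qmI μ u) ^ p) 1,
      sub_zero]
    refine intervalIntegral.integral_congr_ae ?_
    filter_upwards [hqm, ae_of_null hone (fun z (hz : z ∉ ({1}:Set ℝ)) => hz)] with z hz hz1 hzI
    rw [Set.uIoc_of_le (by linarith [h1s.2] : 1 - s ≤ 1)] at hzI
    have hz01 : z ∈ Ioo (0:ℝ) 1 :=
      ⟨lt_of_le_of_lt h1s.1 hzI.1, lt_of_le_of_ne hzI.2 (fun h => hz1 (by simp [h]))⟩
    rw [hz hz01]
  have pieceB : (∫ t in s..(1:ℝ), (1 - quantI (Measure.map (fun x => 1 - x) μ) t) ^ p)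
      = ∫ t in (0:ℝ)..(1-s), (quantI μ t) ^ p := by
    have step1 : (∫ t in s..(1:ℝ), (1 - quantI (Measure.map (fun x => 1 - x) μ) t) ^ p)
        = ∫ t in s..(1:ℝ), (fun u => (qmI μ u) ^ p) (1 - t) := by
      refine intervalIntegral.integral_congr_ae (ae_of_null hone (fun z hz hzI => ?_))
      rw [Set.uIoc_of_le hs.2] at hzI
      have hz01 : z ∈ Ioo (0:ℝ) 1 :=
        ⟨lt_of_le_of_lt hs.1 hzI.1, lt_of_le_of_ne hzI.2 (fun h => hz (by simp [h]))⟩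
      simp only
      rw [quant_R hμ hz01, sub_sub_cancel]
    rw [step1, intervalIntegral.integral_comp_sub_left (fun u => (qmI μ u) ^ p) 1,
      sub_self]
    refine intervalIntegral.integral_congr_ae ?_
    filter_upwards [hqm, ae_of_null hone (fun z (hz : z ∉ ({1}:Set ℝ)) => hz)] with z hz hz1 hzI
    rw [Set.uIoc_of_le h1s.1] at hzI
    have hz01 : z ∈ Ioo (0:ℝ) 1 :=
      ⟨hzI.1, lt_of_le_of_ne (le_trans hzI.2 h1s.2) (fun h => hz1 (by simp [h]))⟩
    rw [hz hz01]
  rw [pieceA, pieceB, add_comm]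

end WpAux

open WpAux

/-- For `p > 1`, every isometric embedding of `W_p([0,1])` into itself is surjective
and is either the identity or the push-forward of the reflection `r(x) = 1-x`;
hence `Isom(W_p([0,1])) ≅ C₂`. -/
theorem isemb_WpI_classification (p : ℝ) (hp : 1 < p) (φ : Measure ℝ → Measure ℝ)
    (hmaps : Set.MapsTo φ P01 P01)
    (hiso : ∀ μ ∈ P01, ∀ ν ∈ P01, dWpI p (φ μ) (φ ν) = dWpI p μ ν) :
    Set.SurjOn φ P01 P01 ∧
    ((∀ μ ∈ P01, φ μ = μ) ∨ (∀ μ ∈ P01, φ μ = Measure.map (fun x => 1 - x) μ)) := by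
  have h01 : (0:ℝ) ∈ Icc (0:ℝ) 1 := ⟨le_refl 0, zero_le_one⟩
  have h11 : (1:ℝ) ∈ Icc (0:ℝ) 1 := ⟨zero_le_one, le_refl 1⟩
  have hd : (∫ t in (0:ℝ)..1, |quantI (φ (nuM 1)) t - quantI (φ (nuM 0)) t| ^ p) = 1 := by
    have h2 := dW_pow_eq_of_eq hp (hiso (nuM 1) (nuM_mem h11) (nuM 0) (nuM_mem h01))
    rw [h2, dist_nu hp h11 h01]
    norm_num
  rcases endpoints hp (hmaps (nuM_mem h11)) (hmaps (nuM_mem h01)) hd with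
    ⟨hA1, hA0⟩ | ⟨hB1, hB0⟩
  · -- identity case
    have hfix : ∀ s ∈ Icc (0:ℝ) 1, φ (nuM s) = nuM s := by
      intro s hs
      refine eq_nu_of_dists hp (hmaps (nuM_mem hs)) hs ?_ ?_
      · have h2 := dW_pow_eq_of_eq hp (hiso (nuM s) (nuM_mem hs) (nuM 1) (nuM_mem h11))
        rw [hA1] at h2
        rw [h2, dist_nu hp hs h11, abs_of_nonpos (by linarith [hs.2])]
        ring
      · have h2 := dW_pow_eq_of_eq hp (hiso (nuM s) (nuM_mem hs) (nuM 0) (nuM_mem h01))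
        rw [hA0] at h2
        rw [h2, dist_nu hp hs h01, sub_zero, abs_of_nonneg hs.1]
    have hid : ∀ μ' ∈ P01, φ μ' = μ' := by
      intro μ' hμ'
      refine eq_of_W_eq hp (hmaps hμ') hμ' (fun s hs => ?_)
      have h2 := dW_pow_eq_of_eq hp (hiso μ' hμ' (nuM s) (nuM_mem hs))
      rw [hfix s hs] at h2
      exact h2
    exact ⟨fun ν hν => ⟨ν, hν, hid ν hν⟩, Or.inl hid⟩
  · -- reflection case
    have hfix : ∀ s ∈ Icc (0:ℝ) 1, φ (nuM s) = nuM (1 - s) := by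
      intro s hs
      have h1s : (1 - s) ∈ Icc (0:ℝ) 1 := ⟨by linarith [hs.2], by linarith [hs.1]⟩
      refine eq_nu_of_dists hp (hmaps (nuM_mem hs)) h1s ?_ ?_
      · have h2 := dW_pow_eq_of_eq hp (hiso (nuM s) (nuM_mem hs) (nuM 0) (nuM_mem h01))
        rw [hB0] at h2
        rw [h2, dist_nu hp hs h01, sub_zero, abs_of_nonneg hs.1]
        ring
      · have h2 := dW_pow_eq_of_eq hp (hiso (nuM s) (nuM_mem hs) (nuM 1) (nuM_mem h11))
        rw [hB1] at h2
        rw [h2, dist_nu hp hs h11, abs_of_nonpos (by linarith [hs.2])]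
        ring
    have href : ∀ μ' ∈ P01, φ μ' = Measure.map (fun x => 1 - x) μ' := by
      intro μ' hμ'
      refine eq_of_W_eq hp (hmaps hμ') (R_mem hμ') (fun s hs => ?_)
      have h1s : (1 - s) ∈ Icc (0:ℝ) 1 := ⟨by linarith [hs.2], by linarith [hs.1]⟩
      have h2 := dW_pow_eq_of_eq hp (hiso μ' hμ' (nuM (1 - s)) (nuM_mem h1s))
      rw [hfix (1 - s) h1s, show (1:ℝ) - (1 - s) = s by ring] at h2
      rw [W_R hp hμ' hs]
      exact h2
    refine ⟨fun ν hν => ⟨Measure.map (fun x => 1 - x) ν, R_mem hν, ?_⟩, Or.inr href⟩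
    rw [href _ (R_mem hν), R_R]
end
end

section
/- For distinct μ, ν ∈ W₁(ℝ), the metric midpoint set M(μ,ν) := {ξ ∈ W₁(ℝ) : d_{W₁}(μ,ξ) = d_{W₁}(ξ,ν) = (1/2)d_{W₁}(μ,ν)} satisfies (1/2)d_{W₁}(μ,ν) ≤ diam(M(μ,ν)) ≤ d_{W₁}(μ,ν). -/
open MeasureTheory Set

noncomputable section

/-- Cumulative distribution function `F_μ(x) = μ((-∞,x])`. -/
def cdfR (μ : Measure ℝ) (x : ℝ) : ℝ := (μ (Set.Iic x)).toReal

/-- The Wasserstein space `W₁(ℝ)`: Borel probability measures on `ℝ` with finite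
first moment. -/
def PR : Set (Measure ℝ) := {μ | IsProbabilityMeasure μ ∧ Integrable (fun x => |x|) μ}

/-- The 1-Wasserstein distance on `ℝ` via Vallender's formula. -/
def dW1R (μ ν : Measure ℝ) : ℝ := ∫ x, |cdfR μ x - cdfR ν x|

/-- The metric midpoint set of `μ` and `ν` in `W₁(ℝ)`. -/
def Mid (μ ν : Measure ℝ) : Set (Measure ℝ) :=
  {ξ ∈ PR | dW1R μ ξ = dW1R μ ν / 2 ∧ dW1R ξ ν = dW1R μ ν / 2}

open Filter Topology ProbabilityTheory
open scoped ENNReal NNReal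

lemma cdfR_eq_cdf (μ : Measure ℝ) [IsProbabilityMeasure μ] (x : ℝ) :
    cdfR μ x = ProbabilityTheory.cdf μ x := (cdf_eq_real μ x).symm

lemma cdfR_nonneg (μ : Measure ℝ) (x : ℝ) : 0 ≤ cdfR μ x := ENNReal.toReal_nonneg

lemma cdfR_le_one (μ : Measure ℝ) [IsProbabilityMeasure μ] (x : ℝ) : cdfR μ x ≤ 1 := by
  rw [cdfR_eq_cdf]; exact cdf_le_one μ x

lemma cdfR_mono (μ : Measure ℝ) [IsProbabilityMeasure μ] : Monotone (cdfR μ) := by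
  intro x y h
  rw [cdfR_eq_cdf, cdfR_eq_cdf]; exact monotone_cdf μ h

lemma measurable_cdfR (μ : Measure ℝ) [IsProbabilityMeasure μ] : Measurable (cdfR μ) :=
  (cdfR_mono μ).measurable

lemma ofReal_cdfR (μ : Measure ℝ) [IsProbabilityMeasure μ] (x : ℝ) :
    ENNReal.ofReal (cdfR μ x) = μ (Iic x) :=
  ENNReal.ofReal_toReal (measure_ne_top μ _)

lemma toReal_Ioi (μ : Measure ℝ) [IsProbabilityMeasure μ] (x : ℝ) :
    (μ (Ioi x)).toReal = 1 - cdfR μ x := by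
  have h : μ (Ioi x) = 1 - μ (Iic x) := by
    rw [← compl_Iic, measure_compl measurableSet_Iic (measure_ne_top μ _), measure_univ]
  rw [h, ENNReal.toReal_sub_of_le prob_le_one ENNReal.one_ne_top]
  simp [cdfR]

lemma ofReal_one_sub_cdfR (μ : Measure ℝ) [IsProbabilityMeasure μ] (x : ℝ) :
    ENNReal.ofReal (1 - cdfR μ x) = μ (Ioi x) := by
  rw [← toReal_Ioi, ENNReal.ofReal_toReal (measure_ne_top μ _)]


lemma lintegral_Iio_cdf (η : Measure ℝ) [SFinite η] :
    (∫⁻ x in Iio (0:ℝ), η (Iic x)) = ∫⁻ ω, ENNReal.ofReal (-ω) ∂η := by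
  have h1 : ∀ x : ℝ, η (Iic x) = ∫⁻ ω, (Iic x).indicator (fun _ => (1:ℝ≥0∞)) ω ∂η := by
    intro x
    rw [lintegral_indicator measurableSet_Iic]
    simp
  simp_rw [h1]
  rw [lintegral_lintegral_swap]
  · have h2 : ∀ ω : ℝ,
        (∫⁻ x in Iio (0:ℝ), (Iic x).indicator (fun _ => (1:ℝ≥0∞)) ω) = ENNReal.ofReal (-ω) := by
      intro ω
      have he : ∀ x : ℝ, (Iic x).indicator (fun _ => (1:ℝ≥0∞)) ω
          = (Ici ω).indicator (fun _ => (1:ℝ≥0∞)) x := by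
        intro x
        by_cases h : ω ≤ x
        · simp [indicator, h]
        · simp [indicator, h]
      simp_rw [he]
      rw [lintegral_indicator measurableSet_Ici, Measure.restrict_restrict measurableSet_Ici,
        setLIntegral_one, Ici_inter_Iio, Real.volume_Ico]
      simp
    simp_rw [h2]
  · apply Measurable.aemeasurable
    have : (Function.uncurry fun (x ω : ℝ) => (Iic x).indicator (fun _ => (1:ℝ≥0∞)) ω)
        = {p : ℝ × ℝ | p.2 ≤ p.1}.indicator (fun _ => (1:ℝ≥0∞)) := by
      ext p
      by_cases h : p.2 ≤ p.1
      · simp [Function.uncurry, indicator, h]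
      · simp [Function.uncurry, indicator, h]
    rw [this]
    exact Measurable.indicator measurable_const (measurableSet_le measurable_snd measurable_fst)

lemma lintegral_Ici_tail (η : Measure ℝ) [SFinite η] :
    (∫⁻ x in Ici (0:ℝ), η (Ioi x)) = ∫⁻ ω, ENNReal.ofReal ω ∂η := by
  have h1 : ∀ x : ℝ, η (Ioi x) = ∫⁻ ω, (Ioi x).indicator (fun _ => (1:ℝ≥0∞)) ω ∂η := by
    intro x
    rw [lintegral_indicator measurableSet_Ioi]
    simp
  simp_rw [h1]
  rw [lintegral_lintegral_swap]
  · have h2 : ∀ ω : ℝ,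
        (∫⁻ x in Ici (0:ℝ), (Ioi x).indicator (fun _ => (1:ℝ≥0∞)) ω) = ENNReal.ofReal ω := by
      intro ω
      have he : ∀ x : ℝ, (Ioi x).indicator (fun _ => (1:ℝ≥0∞)) ω
          = (Iio ω).indicator (fun _ => (1:ℝ≥0∞)) x := by
        intro x
        by_cases h : x < ω
        · simp [indicator, h]
        · simp [indicator, h]
      simp_rw [he]
      rw [lintegral_indicator measurableSet_Iio, Measure.restrict_restrict measurableSet_Iio,
        setLIntegral_one, inter_comm, Ici_inter_Iio, Real.volume_Ico]
      simp
    simp_rw [h2]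
  · apply Measurable.aemeasurable
    have : (Function.uncurry fun (x ω : ℝ) => (Ioi x).indicator (fun _ => (1:ℝ≥0∞)) ω)
        = {p : ℝ × ℝ | p.1 < p.2}.indicator (fun _ => (1:ℝ≥0∞)) := by
      ext p
      by_cases h : p.1 < p.2
      · simp [Function.uncurry, indicator, h]
      · simp [Function.uncurry, indicator, h]
    rw [this]
    exact Measurable.indicator measurable_const (measurableSet_lt measurable_fst measurable_snd)

lemma lintegral_abs_repr (η : Measure ℝ) [SFinite η] :
    ∫⁻ ω, ENNReal.ofReal |ω| ∂η
      = (∫⁻ x in Iio (0:ℝ), η (Iic x)) + ∫⁻ x in Ici (0:ℝ), η (Ioi x) := by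
  rw [lintegral_Iio_cdf, lintegral_Ici_tail,
    ← lintegral_add_left (by fun_prop : Measurable fun ω : ℝ => ENNReal.ofReal (-ω))]
  congr 1
  ext ω
  rcases le_total 0 ω with h | h
  · have h2 : -ω ≤ 0 := by linarith
    rw [abs_of_nonneg h, ENNReal.ofReal_of_nonpos h2, zero_add]
  · rw [abs_of_nonpos h, ENNReal.ofReal_of_nonpos h, add_zero]


lemma integrable_abs_iff_lintegrals (η : Measure ℝ) [IsProbabilityMeasure η] :
    Integrable (fun x => |x|) η ↔
      (∫⁻ x in Iio (0:ℝ), η (Iic x)) < ⊤ ∧ (∫⁻ x in Ici (0:ℝ), η (Ioi x)) < ⊤ := by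
  have hmeas : AEStronglyMeasurable (fun x : ℝ => |x|) η :=
    continuous_abs.aestronglyMeasurable
  have hrw : (∫⁻ ω, ‖|ω|‖ₑ ∂η) = ∫⁻ ω, ENNReal.ofReal |ω| ∂η := by
    congr 1
    ext ω
    rw [Real.enorm_eq_ofReal (abs_nonneg ω)]
  constructor
  · intro h
    have := h.hasFiniteIntegral
    rw [HasFiniteIntegral, hrw, lintegral_abs_repr] at this
    exact ⟨lt_of_le_of_lt le_self_add this, lt_of_le_of_lt le_add_self this⟩
  · rintro ⟨h1, h2⟩
    refine ⟨hmeas, ?_⟩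
    rw [HasFiniteIntegral, hrw, lintegral_abs_repr]
    exact ENNReal.add_lt_top.2 ⟨h1, h2⟩

lemma mem_PR_of_between {μ ν η : Measure ℝ} (hμ : μ ∈ PR) (hν : ν ∈ PR)
    (hp : IsProbabilityMeasure η)
    (h1 : ∀ x, min (cdfR μ x) (cdfR ν x) ≤ cdfR η x)
    (h2 : ∀ x, cdfR η x ≤ max (cdfR μ x) (cdfR ν x)) : η ∈ PR := by
  obtain ⟨hμp, hμi⟩ := hμ
  obtain ⟨hνp, hνi⟩ := hν
  have hμf := (integrable_abs_iff_lintegrals μ).1 hμi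
  have hνf := (integrable_abs_iff_lintegrals ν).1 hνi
  refine ⟨hp, (integrable_abs_iff_lintegrals η).2 ⟨?_, ?_⟩⟩
  · have hb : ∀ x : ℝ, η (Iic x) ≤ μ (Iic x) + ν (Iic x) := by
      intro x
      rw [← ofReal_cdfR η x, ← ofReal_cdfR μ x, ← ofReal_cdfR ν x,
        ← ENNReal.ofReal_add (cdfR_nonneg μ x) (cdfR_nonneg ν x)]
      apply ENNReal.ofReal_le_ofReal
      calc cdfR η x ≤ max (cdfR μ x) (cdfR ν x) := h2 x
        _ ≤ cdfR μ x + cdfR ν x :=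
          max_le (le_add_of_nonneg_right (cdfR_nonneg ν x))
            (le_add_of_nonneg_left (cdfR_nonneg μ x))
    calc (∫⁻ x in Iio (0:ℝ), η (Iic x))
        ≤ ∫⁻ x in Iio (0:ℝ), (μ (Iic x) + ν (Iic x)) := lintegral_mono fun x => hb x
      _ = (∫⁻ x in Iio (0:ℝ), μ (Iic x)) + ∫⁻ x in Iio (0:ℝ), ν (Iic x) := by
          apply lintegral_add_left
          have : (fun x : ℝ => μ (Iic x)) = fun x => ENNReal.ofReal (cdfR μ x) := by
            ext x; rw [ofReal_cdfR]
          rw [this]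
          exact (measurable_cdfR μ).ennreal_ofReal
      _ < ⊤ := ENNReal.add_lt_top.2 ⟨hμf.1, hνf.1⟩
  · have hb : ∀ x : ℝ, η (Ioi x) ≤ μ (Ioi x) + ν (Ioi x) := by
      intro x
      rw [← ofReal_one_sub_cdfR η x, ← ofReal_one_sub_cdfR μ x, ← ofReal_one_sub_cdfR ν x,
        ← ENNReal.ofReal_add (by linarith [cdfR_le_one μ x]) (by linarith [cdfR_le_one ν x])]
      apply ENNReal.ofReal_le_ofReal
      have hmin : min (cdfR μ x) (cdfR ν x) ≤ cdfR η x := h1 x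
      rcases min_cases (cdfR μ x) (cdfR ν x) with ⟨he, _⟩ | ⟨he, _⟩
      · rw [he] at hmin; linarith [cdfR_le_one ν x]
      · rw [he] at hmin; linarith [cdfR_le_one μ x]
    calc (∫⁻ x in Ici (0:ℝ), η (Ioi x))
        ≤ ∫⁻ x in Ici (0:ℝ), (μ (Ioi x) + ν (Ioi x)) := lintegral_mono fun x => hb x
      _ = (∫⁻ x in Ici (0:ℝ), μ (Ioi x)) + ∫⁻ x in Ici (0:ℝ), ν (Ioi x) := by
          apply lintegral_add_left
          have : (fun x : ℝ => μ (Ioi x)) = fun x => ENNReal.ofReal (1 - cdfR μ x) := by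
            ext x; rw [ofReal_one_sub_cdfR]
          rw [this]
          exact ((measurable_const.sub (measurable_cdfR μ))).ennreal_ofReal
      _ < ⊤ := ENNReal.add_lt_top.2 ⟨hμf.2, hνf.2⟩


lemma integrable_cdfR_sub {μ ν : Measure ℝ} (hμ : μ ∈ PR) (hν : ν ∈ PR) :
    Integrable (fun x => cdfR μ x - cdfR ν x) := by
  obtain ⟨hμp, hμi⟩ := hμ
  obtain ⟨hνp, hνi⟩ := hν
  have hμf := (integrable_abs_iff_lintegrals μ).1 hμi
  have hνf := (integrable_abs_iff_lintegrals ν).1 hνi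
  have hmeas : Measurable (fun x => cdfR μ x - cdfR ν x) :=
    (measurable_cdfR μ).sub (measurable_cdfR ν)
  refine ⟨hmeas.aestronglyMeasurable, ?_⟩
  rw [HasFiniteIntegral]
  simp only [enorm_eq_nnnorm]
  have hsplit : (∫⁻ x, (‖cdfR μ x - cdfR ν x‖₊ : ℝ≥0∞))
      = (∫⁻ x in Iio (0:ℝ), (‖cdfR μ x - cdfR ν x‖₊ : ℝ≥0∞))
        + ∫⁻ x in Ici (0:ℝ), (‖cdfR μ x - cdfR ν x‖₊ : ℝ≥0∞) := by
    rw [← compl_Iio, lintegral_add_compl _ measurableSet_Iio]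
  rw [hsplit]
  apply ENNReal.add_lt_top.2
  constructor
  · calc (∫⁻ x in Iio (0:ℝ), (‖cdfR μ x - cdfR ν x‖₊ : ℝ≥0∞))
        ≤ ∫⁻ x in Iio (0:ℝ), (μ (Iic x) + ν (Iic x)) := by
          apply lintegral_mono
          intro x
          show (‖cdfR μ x - cdfR ν x‖₊ : ℝ≥0∞) ≤ μ (Iic x) + ν (Iic x)
          rw [← enorm_eq_nnnorm, Real.enorm_eq_ofReal_abs, ← ofReal_cdfR μ x, ← ofReal_cdfR ν x,
            ← ENNReal.ofReal_add (cdfR_nonneg μ x) (cdfR_nonneg ν x)]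
          apply ENNReal.ofReal_le_ofReal
          calc |cdfR μ x - cdfR ν x| ≤ |cdfR μ x| + |cdfR ν x| := abs_sub _ _
            _ = cdfR μ x + cdfR ν x := by
                rw [abs_of_nonneg (cdfR_nonneg μ x), abs_of_nonneg (cdfR_nonneg ν x)]
      _ = (∫⁻ x in Iio (0:ℝ), μ (Iic x)) + ∫⁻ x in Iio (0:ℝ), ν (Iic x) := by
          apply lintegral_add_left
          have : (fun x : ℝ => μ (Iic x)) = fun x => ENNReal.ofReal (cdfR μ x) := by
            ext x; rw [ofReal_cdfR]
          rw [this]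
          exact (measurable_cdfR μ).ennreal_ofReal
      _ < ⊤ := ENNReal.add_lt_top.2 ⟨hμf.1, hνf.1⟩
  · calc (∫⁻ x in Ici (0:ℝ), (‖cdfR μ x - cdfR ν x‖₊ : ℝ≥0∞))
        ≤ ∫⁻ x in Ici (0:ℝ), (μ (Ioi x) + ν (Ioi x)) := by
          apply lintegral_mono
          intro x
          show (‖cdfR μ x - cdfR ν x‖₊ : ℝ≥0∞) ≤ μ (Ioi x) + ν (Ioi x)
          rw [← enorm_eq_nnnorm, Real.enorm_eq_ofReal_abs, ← ofReal_one_sub_cdfR μ x, ← ofReal_one_sub_cdfR ν x,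
            ← ENNReal.ofReal_add (by linarith [cdfR_le_one μ x]) (by linarith [cdfR_le_one ν x])]
          apply ENNReal.ofReal_le_ofReal
          have h1 : cdfR μ x - cdfR ν x = (1 - cdfR ν x) - (1 - cdfR μ x) := by ring
          rw [h1]
          calc |(1 - cdfR ν x) - (1 - cdfR μ x)| ≤ |1 - cdfR ν x| + |1 - cdfR μ x| := abs_sub _ _
            _ = (1 - cdfR ν x) + (1 - cdfR μ x) := by
                rw [abs_of_nonneg (by linarith [cdfR_le_one ν x]),
                  abs_of_nonneg (by linarith [cdfR_le_one μ x])]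
            _ = (1 - cdfR μ x) + (1 - cdfR ν x) := by ring
      _ = (∫⁻ x in Ici (0:ℝ), μ (Ioi x)) + ∫⁻ x in Ici (0:ℝ), ν (Ioi x) := by
          apply lintegral_add_left
          have : (fun x : ℝ => μ (Ioi x)) = fun x => ENNReal.ofReal (1 - cdfR μ x) := by
            ext x; rw [ofReal_one_sub_cdfR]
          rw [this]
          exact (measurable_const.sub (measurable_cdfR μ)).ennreal_ofReal
      _ < ⊤ := ENNReal.add_lt_top.2 ⟨hμf.2, hνf.2⟩


lemma cdfR_stieltjes (f : StieltjesFunction ℝ) (h0 : Tendsto f atBot (𝓝 0))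
    (h1 : Tendsto f atTop (𝓝 1)) :
    IsProbabilityMeasure f.measure ∧ ∀ x, cdfR f.measure x = f x := by
  refine ⟨⟨by rw [f.measure_univ h0 h1]; simp⟩, fun x => ?_⟩
  have hnn : 0 ≤ f x := by
    refine le_of_tendsto h0 ?_
    filter_upwards [eventually_le_atBot x] with y hy
    exact f.mono hy
  rw [cdfR, f.measure_Iic h0 x, sub_zero, ENNReal.toReal_ofReal hnn]

def sfMin (F G : StieltjesFunction ℝ) : StieltjesFunction ℝ where
  toFun := fun x => min (F x) (G x)
  mono' := fun x y h => min_le_min (F.mono h) (G.mono h)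
  right_continuous' := fun x => (F.right_continuous x).min (G.right_continuous x)

def sfMax (F G : StieltjesFunction ℝ) : StieltjesFunction ℝ where
  toFun := fun x => max (F x) (G x)
  mono' := fun x y h => max_le_max (F.mono h) (G.mono h)
  right_continuous' := fun x => (F.right_continuous x).max (G.right_continuous x)

def sfAvg (F G : StieltjesFunction ℝ) : StieltjesFunction ℝ where
  toFun := fun x => (F x + G x) / 2
  mono' := fun x y h => by
    have := add_le_add (F.mono h) (G.mono h)
    dsimp only
    linarith
  right_continuous' := fun x => ((F.right_continuous x).add (G.right_continuous x)).div_const 2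

def sfHyb (F G : StieltjesFunction ℝ) (a : ℝ) : StieltjesFunction ℝ where
  toFun := fun x => if x < a then min (F x) (G x) else max (F x) (G x)
  mono' := fun x y h => by
    dsimp only
    by_cases hx : x < a <;> by_cases hy : y < a
    · simp only [hx, hy, if_true]
      exact min_le_min (F.mono h) (G.mono h)
    · simp only [hx, hy, if_true, if_false]
      exact le_trans (min_le_min (F.mono h) (G.mono h)) (min_le_max)
    · exact absurd (lt_of_le_of_lt h hy) hx
    · simp only [hx, hy, if_false]
      exact max_le_max (F.mono h) (G.mono h)
  right_continuous' := fun x => by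
    by_cases hx : x < a
    · have hcong : (fun y => if y < a then min (F y) (G y) else max (F y) (G y))
          =ᶠ[𝓝[Ici x] x] (fun y => min (F y) (G y)) := by
        filter_upwards [nhdsWithin_le_nhds (Iio_mem_nhds hx)] with y hy
        have hy' : y < a := hy
        simp [hy']
      exact ContinuousWithinAt.congr_of_eventuallyEq
        ((F.right_continuous x).min (G.right_continuous x)) hcong (by simp [hx])
    · have hcong : (fun y => if y < a then min (F y) (G y) else max (F y) (G y))
          =ᶠ[𝓝[Ici x] x] (fun y => max (F y) (G y)) := by
        filter_upwards [self_mem_nhdsWithin] with y (hy : x ≤ y)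
        have : ¬ y < a := fun h => hx (lt_of_le_of_lt hy h)
        simp [this]
      exact ContinuousWithinAt.congr_of_eventuallyEq
        ((F.right_continuous x).max (G.right_continuous x)) hcong (by simp [hx])

lemma sfMin_apply (F G : StieltjesFunction ℝ) (x : ℝ) : sfMin F G x = min (F x) (G x) := rfl

lemma sfMax_apply (F G : StieltjesFunction ℝ) (x : ℝ) : sfMax F G x = max (F x) (G x) := rfl

lemma sfAvg_apply (F G : StieltjesFunction ℝ) (x : ℝ) : sfAvg F G x = (F x + G x) / 2 := rfl

lemma sfHyb_apply (F G : StieltjesFunction ℝ) (a x : ℝ) :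
    sfHyb F G a x = if x < a then min (F x) (G x) else max (F x) (G x) := rfl

lemma sfHyb_tendsto_atBot (F G : StieltjesFunction ℝ) (a : ℝ)
    (hF : Tendsto F atBot (𝓝 0)) (hG : Tendsto G atBot (𝓝 0)) :
    Tendsto (sfHyb F G a) atBot (𝓝 0) := by
  have h : Tendsto (fun x => min (F x) (G x)) atBot (𝓝 0) := by
    have := hF.min hG
    simpa using this
  refine h.congr' ?_
  filter_upwards [eventually_lt_atBot a] with y hy
  simp [sfHyb, hy]

lemma sfHyb_tendsto_atTop (F G : StieltjesFunction ℝ) (a : ℝ)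
    (hF : Tendsto F atTop (𝓝 1)) (hG : Tendsto G atTop (𝓝 1)) :
    Tendsto (sfHyb F G a) atTop (𝓝 1) := by
  have h : Tendsto (fun x => max (F x) (G x)) atTop (𝓝 1) := by
    have := hF.max hG
    simpa using this
  refine h.congr' ?_
  filter_upwards [eventually_ge_atTop a] with y hy
  have : ¬ y < a := not_lt.2 hy
  simp [sfHyb, this]


/-- For distinct `μ, ν ∈ W₁(ℝ)`, the diameter of the metric midpoint set lies between
`d(μ,ν)/2` and `d(μ,ν)`. -/
theorem midpoint_set_diameter (μ : Measure ℝ) (hμ : μ ∈ PR) (ν : Measure ℝ) (hν : ν ∈ PR)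
    (hne : μ ≠ ν) :
    ∃ r : ℝ, IsLUB {d : ℝ | ∃ η₁ ∈ Mid μ ν, ∃ η₂ ∈ Mid μ ν, d = dW1R η₁ η₂} r ∧
      dW1R μ ν / 2 ≤ r ∧ r ≤ dW1R μ ν := by
  classical
  have hμp : IsProbabilityMeasure μ := hμ.1
  have hνp : IsProbabilityMeasure ν := hν.1
  set d : ℝ := dW1R μ ν with hd
  have hg : Integrable (fun x => cdfR μ x - cdfR ν x) := integrable_cdfR_sub hμ hν
  have hgp : Integrable (fun x => max (cdfR μ x - cdfR ν x) 0) := hg.pos_part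
  have hgn : Integrable (fun x => max (-(cdfR μ x - cdfR ν x)) 0) := by
    have := hg.neg.pos_part
    simpa using this
  have hdeq : d = ∫ x, |cdfR μ x - cdfR ν x| := rfl
  have hd0 : 0 ≤ d := by
    rw [hdeq]; exact integral_nonneg fun x => abs_nonneg _
  set A : ℝ := ∫ x, max (cdfR μ x - cdfR ν x) 0 with hA
  set B : ℝ := ∫ x, max (-(cdfR μ x - cdfR ν x)) 0 with hB
  have hABd : A + B = d := by
    rw [hA, hB, hdeq, ← integral_add hgp hgn]
    congr 1
    ext x
    rcases le_total 0 (cdfR μ x - cdfR ν x) with h | h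
    · rw [max_eq_left h, max_eq_right (by linarith), abs_of_nonneg h, add_zero]
    · rw [max_eq_right h, max_eq_left (by linarith), abs_of_nonpos h, zero_add]
  -- the "vertical" midpoint η₀ with cdf the average
  have havg0 : Tendsto (sfAvg (cdf μ) (cdf ν)) atBot (𝓝 0) := by
    have h := ((tendsto_cdf_atBot μ).add (tendsto_cdf_atBot ν)).div_const 2
    have he : (fun x => (cdf μ x + cdf ν x) / 2) = ⇑(sfAvg (cdf μ) (cdf ν)) := by
      ext x; rw [sfAvg_apply]
    rw [he] at h
    simpa using h
  have havg1 : Tendsto (sfAvg (cdf μ) (cdf ν)) atTop (𝓝 1) := by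
    have h := ((tendsto_cdf_atTop μ).add (tendsto_cdf_atTop ν)).div_const 2
    have he : (fun x => (cdf μ x + cdf ν x) / 2) = ⇑(sfAvg (cdf μ) (cdf ν)) := by
      ext x; rw [sfAvg_apply]
    rw [he] at h
    norm_num at h
    exact h
  obtain ⟨h₀p, h₀c⟩ := cdfR_stieltjes _ havg0 havg1
  set η₀ : Measure ℝ := (sfAvg (cdf μ) (cdf ν)).measure with hη₀
  have h₀c' : ∀ x, cdfR η₀ x = (cdfR μ x + cdfR ν x) / 2 := by
    intro x
    rw [h₀c x, sfAvg_apply, cdfR_eq_cdf μ, cdfR_eq_cdf ν]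
  have h₀PR : η₀ ∈ PR := by
    refine mem_PR_of_between hμ hν h₀p (fun x => ?_) (fun x => ?_)
    · rw [h₀c' x]
      have h1 := min_le_left (cdfR μ x) (cdfR ν x)
      have h2 := min_le_right (cdfR μ x) (cdfR ν x)
      linarith
    · rw [h₀c' x]
      have h1 := le_max_left (cdfR μ x) (cdfR ν x)
      have h2 := le_max_right (cdfR μ x) (cdfR ν x)
      linarith
  have h₀mid : η₀ ∈ Mid μ ν := by
    refine ⟨h₀PR, ?_, ?_⟩
    · show (∫ x, |cdfR μ x - cdfR η₀ x|) = d / 2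
      have he : (fun x => |cdfR μ x - cdfR η₀ x|) = fun x => |cdfR μ x - cdfR ν x| / 2 := by
        ext x
        rw [h₀c' x]
        rw [show cdfR μ x - (cdfR μ x + cdfR ν x) / 2 = (cdfR μ x - cdfR ν x) / 2 by ring,
          abs_div]
        norm_num
      rw [he, integral_div, ← hdeq]
    · show (∫ x, |cdfR η₀ x - cdfR ν x|) = d / 2
      have he : (fun x => |cdfR η₀ x - cdfR ν x|) = fun x => |cdfR μ x - cdfR ν x| / 2 := by
        ext x
        rw [h₀c' x]
        rw [show (cdfR μ x + cdfR ν x) / 2 - cdfR ν x = (cdfR μ x - cdfR ν x) / 2 by ring,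
          abs_div]
        norm_num
      rw [he, integral_div, ← hdeq]
  -- key step: a pair of midpoints at distance at least d/2
  have key : ∃ η₁ ∈ Mid μ ν, ∃ η₂ ∈ Mid μ ν, d / 2 ≤ dW1R η₁ η₂ := by
    by_cases hABeq : A = B
    · -- use the min and max cdfs
      have hA2 : A = d / 2 := by linarith
      have hB2 : B = d / 2 := by linarith
      have hmin0 : Tendsto (sfMin (cdf μ) (cdf ν)) atBot (𝓝 0) := by
        have h := (tendsto_cdf_atBot μ).min (tendsto_cdf_atBot ν)
        have he : (fun x => min (cdf μ x) (cdf ν x)) = ⇑(sfMin (cdf μ) (cdf ν)) := by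
          ext x; rw [sfMin_apply]
        rw [he] at h
        simpa using h
      have hmin1 : Tendsto (sfMin (cdf μ) (cdf ν)) atTop (𝓝 1) := by
        have h := (tendsto_cdf_atTop μ).min (tendsto_cdf_atTop ν)
        have he : (fun x => min (cdf μ x) (cdf ν x)) = ⇑(sfMin (cdf μ) (cdf ν)) := by
          ext x; rw [sfMin_apply]
        rw [he] at h
        simpa using h
      have hmax0 : Tendsto (sfMax (cdf μ) (cdf ν)) atBot (𝓝 0) := by
        have h := (tendsto_cdf_atBot μ).max (tendsto_cdf_atBot ν)
        have he : (fun x => max (cdf μ x) (cdf ν x)) = ⇑(sfMax (cdf μ) (cdf ν)) := by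
          ext x; rw [sfMax_apply]
        rw [he] at h
        simpa using h
      have hmax1 : Tendsto (sfMax (cdf μ) (cdf ν)) atTop (𝓝 1) := by
        have h := (tendsto_cdf_atTop μ).max (tendsto_cdf_atTop ν)
        have he : (fun x => max (cdf μ x) (cdf ν x)) = ⇑(sfMax (cdf μ) (cdf ν)) := by
          ext x; rw [sfMax_apply]
        rw [he] at h
        simpa using h
      obtain ⟨h₁p, h₁c⟩ := cdfR_stieltjes _ hmin0 hmin1
      obtain ⟨h₂p, h₂c⟩ := cdfR_stieltjes _ hmax0 hmax1
      set η₁ : Measure ℝ := (sfMin (cdf μ) (cdf ν)).measure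
      set η₂ : Measure ℝ := (sfMax (cdf μ) (cdf ν)).measure
      have h₁c' : ∀ x, cdfR η₁ x = min (cdfR μ x) (cdfR ν x) := by
        intro x; rw [h₁c x, sfMin_apply, cdfR_eq_cdf μ, cdfR_eq_cdf ν]
      have h₂c' : ∀ x, cdfR η₂ x = max (cdfR μ x) (cdfR ν x) := by
        intro x; rw [h₂c x, sfMax_apply, cdfR_eq_cdf μ, cdfR_eq_cdf ν]
      have h₁PR : η₁ ∈ PR :=
        mem_PR_of_between hμ hν h₁p (fun x => le_of_eq (h₁c' x).symm)
          (fun x => (h₁c' x).le.trans min_le_max)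
      have h₂PR : η₂ ∈ PR :=
        mem_PR_of_between hμ hν h₂p (fun x => min_le_max.trans (h₂c' x).ge)
          (fun x => le_of_eq (h₂c' x))
      have h₁mid : η₁ ∈ Mid μ ν := by
        refine ⟨h₁PR, ?_, ?_⟩
        · show (∫ x, |cdfR μ x - cdfR η₁ x|) = d / 2
          have he : (fun x => |cdfR μ x - cdfR η₁ x|)
              = fun x => max (cdfR μ x - cdfR ν x) 0 := by
            ext x
            rw [h₁c' x]
            rcases le_total (cdfR μ x) (cdfR ν x) with h | h
            · rw [min_eq_left h, sub_self, abs_zero, max_eq_right (by linarith)]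
            · rw [min_eq_right h, abs_of_nonneg (by linarith), max_eq_left (by linarith)]
          rw [he, ← hA, hA2]
        · show (∫ x, |cdfR η₁ x - cdfR ν x|) = d / 2
          have he : (fun x => |cdfR η₁ x - cdfR ν x|)
              = fun x => max (-(cdfR μ x - cdfR ν x)) 0 := by
            ext x
            rw [h₁c' x]
            rcases le_total (cdfR μ x) (cdfR ν x) with h | h
            · rw [min_eq_left h, abs_of_nonpos (by linarith), max_eq_left (by linarith)]
            · rw [min_eq_right h, sub_self, abs_zero, max_eq_right (by linarith)]
          rw [he, ← hB, hB2]
      have h₂mid : η₂ ∈ Mid μ ν := by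
        refine ⟨h₂PR, ?_, ?_⟩
        · show (∫ x, |cdfR μ x - cdfR η₂ x|) = d / 2
          have he : (fun x => |cdfR μ x - cdfR η₂ x|)
              = fun x => max (-(cdfR μ x - cdfR ν x)) 0 := by
            ext x
            rw [h₂c' x]
            rcases le_total (cdfR μ x) (cdfR ν x) with h | h
            · rw [max_eq_right h, abs_of_nonpos (by linarith), max_eq_left (by linarith)]
            · rw [max_eq_left h, sub_self, abs_zero, max_eq_right (by linarith)]
          rw [he, ← hB, hB2]
        · show (∫ x, |cdfR η₂ x - cdfR ν x|) = d / 2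
          have he : (fun x => |cdfR η₂ x - cdfR ν x|)
              = fun x => max (cdfR μ x - cdfR ν x) 0 := by
            ext x
            rw [h₂c' x]
            rcases le_total (cdfR μ x) (cdfR ν x) with h | h
            · rw [max_eq_right h, sub_self, abs_zero, max_eq_right (by linarith)]
            · rw [max_eq_left h, abs_of_nonneg (by linarith), max_eq_left (by linarith)]
          rw [he, ← hA, hA2]
      refine ⟨η₁, h₁mid, η₂, h₂mid, ?_⟩
      have he : (fun x => |cdfR η₁ x - cdfR η₂ x|) = fun x => |cdfR μ x - cdfR ν x| := by
        ext x
        rw [h₁c' x, h₂c' x]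
        rcases le_total (cdfR μ x) (cdfR ν x) with h | h
        · rw [min_eq_left h, max_eq_right h]
        · rw [min_eq_right h, max_eq_left h, abs_sub_comm]
      show d / 2 ≤ ∫ x, |cdfR η₁ x - cdfR η₂ x|
      rw [he, ← hdeq]
      linarith
    · -- A ≠ B : use a horizontal "hybrid" midpoint together with η₀
      -- the primitive of the integrable function g = Fμ - Fν
      have hdisj : ∀ b c : ℝ, Disjoint (Iio b) (Ico b c) := by
        intro b c
        rw [Set.disjoint_left]
        rintro x hx ⟨h0, _⟩
        exact absurd hx (not_lt.2 h0)
      have hpq : ∀ a : ℝ, (∫ x in Iio a, (cdfR μ x - cdfR ν x))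
          = (∫ x in Iio (0:ℝ), (cdfR μ x - cdfR ν x))
            + ∫ x in (0:ℝ)..a, (cdfR μ x - cdfR ν x) := by
        intro a
        rcases le_or_gt 0 a with h | h
        · rw [intervalIntegral.integral_of_le h, ← Iio_union_Ico_eq_Iio h,
            setIntegral_union (hdisj 0 a) measurableSet_Ico hg.integrableOn hg.integrableOn]
          congr 1
          exact setIntegral_congr_set Ico_ae_eq_Ioc
        · have hsplit : (∫ x in Iio (0:ℝ), (cdfR μ x - cdfR ν x))
              = (∫ x in Iio a, (cdfR μ x - cdfR ν x))
                + ∫ x in Ico a 0, (cdfR μ x - cdfR ν x) := by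
            rw [← setIntegral_union (hdisj a 0) measurableSet_Ico hg.integrableOn
              hg.integrableOn, Iio_union_Ico_eq_Iio h.le]
          rw [hsplit, intervalIntegral.integral_symm, intervalIntegral.integral_of_le h.le]
          rw [show (∫ x in Ioc a 0, (cdfR μ x - cdfR ν x))
              = ∫ x in Ico a 0, (cdfR μ x - cdfR ν x) from
            (setIntegral_congr_set Ico_ae_eq_Ioc).symm]
          ring
      have hpc : Continuous (fun a : ℝ => ∫ x in Iio a, (cdfR μ x - cdfR ν x)) := by
        have : (fun a : ℝ => ∫ x in Iio a, (cdfR μ x - cdfR ν x))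
            = fun a : ℝ => (∫ x in Iio (0:ℝ), (cdfR μ x - cdfR ν x))
              + ∫ x in (0:ℝ)..a, (cdfR μ x - cdfR ν x) := funext hpq
        rw [this]
        exact continuous_const.add (hg.continuous_primitive 0)
      have hpbot : Tendsto (fun a : ℝ => ∫ x in Iio a, (cdfR μ x - cdfR ν x)) atBot (𝓝 0) := by
        have h1 : Tendsto (fun a : ℝ => ∫ x in a..(0:ℝ), (cdfR μ x - cdfR ν x)) atBot
            (𝓝 (∫ x in Iic (0:ℝ), (cdfR μ x - cdfR ν x))) :=
          intervalIntegral_tendsto_integral_Iic 0 hg.integrableOn tendsto_id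
        have h2 : Tendsto (fun a : ℝ => ∫ x in (0:ℝ)..a, (cdfR μ x - cdfR ν x)) atBot
            (𝓝 (-∫ x in Iic (0:ℝ), (cdfR μ x - cdfR ν x))) := by
          refine h1.neg.congr fun a => ?_
          rw [intervalIntegral.integral_symm, neg_neg]
        have h3 : Tendsto (fun a : ℝ => (∫ x in Iio (0:ℝ), (cdfR μ x - cdfR ν x))
            + ∫ x in (0:ℝ)..a, (cdfR μ x - cdfR ν x)) atBot
            (𝓝 ((∫ x in Iio (0:ℝ), (cdfR μ x - cdfR ν x))
              + -(∫ x in Iic (0:ℝ), (cdfR μ x - cdfR ν x)))) := tendsto_const_nhds.add h2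
        rw [funext hpq]
        have h4 : (∫ x in Iio (0:ℝ), (cdfR μ x - cdfR ν x))
            + -(∫ x in Iic (0:ℝ), (cdfR μ x - cdfR ν x)) = 0 := by
          rw [← integral_Iic_eq_integral_Iio]
          ring
        rwa [h4] at h3
      have hIntAB : (∫ x, (cdfR μ x - cdfR ν x)) = A - B := by
        rw [hA, hB, ← integral_sub hgp hgn]
        congr 1
        ext x
        rcases le_total 0 (cdfR μ x - cdfR ν x) with h | h
        · rw [max_eq_left h, max_eq_right (by linarith)]
          ring
        · rw [max_eq_right h, max_eq_left (by linarith)]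
          ring
      have hptop : Tendsto (fun a : ℝ => ∫ x in Iio a, (cdfR μ x - cdfR ν x)) atTop
          (𝓝 (A - B)) := by
        have h1 : Tendsto (fun a : ℝ => ∫ x in (0:ℝ)..a, (cdfR μ x - cdfR ν x)) atTop
            (𝓝 (∫ x in Ioi (0:ℝ), (cdfR μ x - cdfR ν x))) :=
          intervalIntegral_tendsto_integral_Ioi 0 hg.integrableOn tendsto_id
        have h3 : Tendsto (fun a : ℝ => (∫ x in Iio (0:ℝ), (cdfR μ x - cdfR ν x))
            + ∫ x in (0:ℝ)..a, (cdfR μ x - cdfR ν x)) atTop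
            (𝓝 ((∫ x in Iio (0:ℝ), (cdfR μ x - cdfR ν x))
              + (∫ x in Ioi (0:ℝ), (cdfR μ x - cdfR ν x)))) := tendsto_const_nhds.add h1
        rw [funext hpq]
        have h4 : (∫ x in Iio (0:ℝ), (cdfR μ x - cdfR ν x))
            + (∫ x in Ioi (0:ℝ), (cdfR μ x - cdfR ν x)) = A - B := by
          rw [← hIntAB, ← integral_Ici_eq_integral_Ioi, ← compl_Iio,
            integral_add_compl measurableSet_Iio hg]
        rwa [h4] at h3
      -- find the balancing point a
      have hcont : Continuous (fun a : ℝ => B + ∫ x in Iio a, (cdfR μ x - cdfR ν x)) :=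
        continuous_const.add hpc
      have hhbot : Tendsto (fun a : ℝ => B + ∫ x in Iio a, (cdfR μ x - cdfR ν x)) atBot
          (𝓝 B) := by
        have h3 : Tendsto (fun a : ℝ => B + ∫ x in Iio a, (cdfR μ x - cdfR ν x)) atBot
            (𝓝 (B + 0)) := tendsto_const_nhds.add hpbot
        simpa using h3
      have hhtop : Tendsto (fun a : ℝ => B + ∫ x in Iio a, (cdfR μ x - cdfR ν x)) atTop
          (𝓝 A) := by
        have h3 : Tendsto (fun a : ℝ => B + ∫ x in Iio a, (cdfR μ x - cdfR ν x)) atTop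
            (𝓝 (B + (A - B))) := tendsto_const_nhds.add hptop
        have h4 : B + (A - B) = A := by ring
        rwa [h4] at h3
      obtain ⟨a, ha⟩ : ∃ a : ℝ, B + (∫ x in Iio a, (cdfR μ x - cdfR ν x)) = d / 2 := by
        rcases lt_or_gt_of_ne hABeq with hlt | hlt
        · -- A < B : B > d/2 > A
          exact intermediate_value_univ₂_eventually₂ (l₁ := atTop) (l₂ := atBot)
            hcont continuous_const
            (hhtop.eventually_le_const (by linarith)) (hhbot.eventually_const_le (by linarith))
        · -- B < A
          exact intermediate_value_univ₂_eventually₂ (l₁ := atBot) (l₂ := atTop)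
            hcont continuous_const
            (hhbot.eventually_le_const (by linarith)) (hhtop.eventually_const_le (by linarith))
      -- the hybrid midpoint
      have hhyb0 := sfHyb_tendsto_atBot (cdf μ) (cdf ν) a (tendsto_cdf_atBot μ)
        (tendsto_cdf_atBot ν)
      have hhyb1 := sfHyb_tendsto_atTop (cdf μ) (cdf ν) a (tendsto_cdf_atTop μ)
        (tendsto_cdf_atTop ν)
      obtain ⟨h₁p, h₁c⟩ := cdfR_stieltjes _ hhyb0 hhyb1
      set η₁ : Measure ℝ := (sfHyb (cdf μ) (cdf ν) a).measure with hη₁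
      have h₁c' : ∀ x, cdfR η₁ x
          = if x < a then min (cdfR μ x) (cdfR ν x) else max (cdfR μ x) (cdfR ν x) := by
        intro x
        rw [h₁c x, sfHyb_apply, cdfR_eq_cdf μ, cdfR_eq_cdf ν]
      have h₁PR : η₁ ∈ PR := by
        refine mem_PR_of_between hμ hν h₁p (fun x => ?_) (fun x => ?_)
        · rw [h₁c' x]; split_ifs
          · exact le_rfl
          · exact min_le_max
        · rw [h₁c' x]; split_ifs
          · exact min_le_max
          · exact le_rfl
      have hφint : Integrable (fun x => if x < a then max (cdfR μ x - cdfR ν x) 0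
          else max (-(cdfR μ x - cdfR ν x)) 0) := by
        have hpi : Integrable ((Iio a).piecewise (fun x => max (cdfR μ x - cdfR ν x) 0)
            (fun x => max (-(cdfR μ x - cdfR ν x)) 0)) :=
          Integrable.piecewise measurableSet_Iio hgp.integrableOn hgn.integrableOn
        refine hpi.congr (Filter.Eventually.of_forall fun x => ?_)
        by_cases hx : x < a
        · simp [Set.piecewise, hx]
        · simp [Set.piecewise, hx]
      have hφval : (∫ x, (if x < a then max (cdfR μ x - cdfR ν x) 0
          else max (-(cdfR μ x - cdfR ν x)) 0)) = d / 2 := by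
        have hsplit := integral_add_compl (s := Iio a) measurableSet_Iio hφint
        rw [compl_Iio] at hsplit
        have e1 : (∫ x in Iio a, (if x < a then max (cdfR μ x - cdfR ν x) 0
            else max (-(cdfR μ x - cdfR ν x)) 0)) = ∫ x in Iio a, max (cdfR μ x - cdfR ν x) 0 :=
          setIntegral_congr_fun measurableSet_Iio (fun x hx => by
            simp only [mem_Iio] at hx; rw [if_pos hx])
        have e2 : (∫ x in Ici a, (if x < a then max (cdfR μ x - cdfR ν x) 0
            else max (-(cdfR μ x - cdfR ν x)) 0))
            = ∫ x in Ici a, max (-(cdfR μ x - cdfR ν x)) 0 :=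
          setIntegral_congr_fun measurableSet_Ici (fun x hx => by
            simp only [mem_Ici] at hx; rw [if_neg (not_lt.2 hx)])
        have r1 : (∫ x in Iio a, max (cdfR μ x - cdfR ν x) 0)
            - (∫ x in Iio a, max (-(cdfR μ x - cdfR ν x)) 0)
            = ∫ x in Iio a, (cdfR μ x - cdfR ν x) := by
          rw [← integral_sub hgp.integrableOn hgn.integrableOn]
          refine setIntegral_congr_fun measurableSet_Iio (fun x _ => ?_)
          rcases le_total 0 (cdfR μ x - cdfR ν x) with h | h
          · rw [max_eq_left h, max_eq_right (by linarith)]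
            ring
          · rw [max_eq_right h, max_eq_left (by linarith)]
            ring
        have r2 : (∫ x in Iio a, max (-(cdfR μ x - cdfR ν x)) 0)
            + (∫ x in Ici a, max (-(cdfR μ x - cdfR ν x)) 0) = B := by
          have h5 := integral_add_compl (s := Iio a) measurableSet_Iio hgn
          rw [compl_Iio] at h5
          rw [h5, hB]
        rw [← hsplit, e1, e2]
        linarith [ha]
      have h₁mid : η₁ ∈ Mid μ ν := by
        refine ⟨h₁PR, ?_, ?_⟩
        · show (∫ x, |cdfR μ x - cdfR η₁ x|) = d / 2
          have he : (fun x => |cdfR μ x - cdfR η₁ x|)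
              = fun x => (if x < a then max (cdfR μ x - cdfR ν x) 0
                else max (-(cdfR μ x - cdfR ν x)) 0) := by
            ext x
            rw [h₁c' x]
            by_cases hx : x < a
            · rw [if_pos hx, if_pos hx]
              rcases le_total (cdfR μ x) (cdfR ν x) with h | h
              · rw [min_eq_left h, sub_self, abs_zero, max_eq_right (by linarith)]
              · rw [min_eq_right h, abs_of_nonneg (by linarith), max_eq_left (by linarith)]
            · rw [if_neg hx, if_neg hx]
              rcases le_total (cdfR μ x) (cdfR ν x) with h | h
              · rw [max_eq_right h, abs_of_nonpos (by linarith), max_eq_left (by linarith)]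
              · rw [max_eq_left h, sub_self, abs_zero, max_eq_right (by linarith)]
          rw [he, hφval]
        · show (∫ x, |cdfR η₁ x - cdfR ν x|) = d / 2
          have he : (fun x => |cdfR η₁ x - cdfR ν x|)
              = fun x => |cdfR μ x - cdfR ν x| - (if x < a then max (cdfR μ x - cdfR ν x) 0
                else max (-(cdfR μ x - cdfR ν x)) 0) := by
            ext x
            rw [h₁c' x]
            by_cases hx : x < a
            · rcases le_total (cdfR μ x) (cdfR ν x) with h | h
              · rw [if_pos hx, if_pos hx, min_eq_left h,
                  max_eq_right (show cdfR μ x - cdfR ν x ≤ 0 by linarith), sub_zero]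
              · rw [if_pos hx, if_pos hx, min_eq_right h, sub_self, abs_zero,
                  max_eq_left (show (0:ℝ) ≤ cdfR μ x - cdfR ν x by linarith),
                  abs_of_nonneg (show (0:ℝ) ≤ cdfR μ x - cdfR ν x by linarith), sub_self]
            · rcases le_total (cdfR μ x) (cdfR ν x) with h | h
              · rw [if_neg hx, if_neg hx, max_eq_right h, sub_self, abs_zero,
                  max_eq_left (show (0:ℝ) ≤ -(cdfR μ x - cdfR ν x) by linarith),
                  abs_of_nonpos (show cdfR μ x - cdfR ν x ≤ 0 by linarith), sub_self]
              · rw [if_neg hx, if_neg hx, max_eq_left h,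
                  max_eq_right (show -(cdfR μ x - cdfR ν x) ≤ 0 by linarith), sub_zero]
          rw [he, integral_sub hg.abs hφint, ← hdeq, hφval]
          ring
      refine ⟨η₁, h₁mid, η₀, h₀mid, ?_⟩
      show d / 2 ≤ ∫ x, |cdfR η₁ x - cdfR η₀ x|
      have he : (fun x => |cdfR η₁ x - cdfR η₀ x|)
          = fun x => |cdfR μ x - cdfR ν x| / 2 := by
        ext x
        rw [h₁c' x, h₀c' x]
        by_cases hx : x < a
        · rw [if_pos hx]
          rcases le_total (cdfR μ x) (cdfR ν x) with h | h
          · rw [min_eq_left h,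
              abs_of_nonpos (show cdfR μ x - (cdfR μ x + cdfR ν x) / 2 ≤ 0 by linarith),
              abs_of_nonpos (show cdfR μ x - cdfR ν x ≤ 0 by linarith)]
            ring
          · rw [min_eq_right h,
              abs_of_nonpos (show cdfR ν x - (cdfR μ x + cdfR ν x) / 2 ≤ 0 by linarith),
              abs_of_nonneg (show (0:ℝ) ≤ cdfR μ x - cdfR ν x by linarith)]
            ring
        · rw [if_neg hx]
          rcases le_total (cdfR μ x) (cdfR ν x) with h | h
          · rw [max_eq_right h,
              abs_of_nonneg (show (0:ℝ) ≤ cdfR ν x - (cdfR μ x + cdfR ν x) / 2 by linarith),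
              abs_of_nonpos (show cdfR μ x - cdfR ν x ≤ 0 by linarith)]
            ring
          · rw [max_eq_left h,
              abs_of_nonneg (show (0:ℝ) ≤ cdfR μ x - (cdfR μ x + cdfR ν x) / 2 by linarith),
              abs_of_nonneg (show (0:ℝ) ≤ cdfR μ x - cdfR ν x by linarith)]
            ring
      rw [he, integral_div, ← hdeq]
  -- now conclude
  set S : Set ℝ := {s : ℝ | ∃ η₁ ∈ Mid μ ν, ∃ η₂ ∈ Mid μ ν, s = dW1R η₁ η₂} with hS
  obtain ⟨η₁, h₁mid, η₂, h₂mid, hge⟩ := key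
  have hmemS : dW1R η₁ η₂ ∈ S := ⟨η₁, h₁mid, η₂, h₂mid, rfl⟩
  have hSne : S.Nonempty := ⟨_, hmemS⟩
  have hub : ∀ s ∈ S, s ≤ d := by
    rintro s ⟨ξ₁, ⟨hP1, hm1, _⟩, ξ₂, ⟨hP2, hm2, _⟩, rfl⟩
    have h1 : Integrable (fun x => cdfR μ x - cdfR ξ₁ x) := integrable_cdfR_sub hμ hP1
    have h2 : Integrable (fun x => cdfR μ x - cdfR ξ₂ x) := integrable_cdfR_sub hμ hP2
    have h12 : Integrable (fun x => |cdfR ξ₁ x - cdfR ξ₂ x|) := by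
      have h3 : Integrable (fun x => cdfR ξ₁ x - cdfR ξ₂ x) := by
        refine (h2.sub h1).congr (Filter.Eventually.of_forall fun x => ?_)
        simp only [Pi.sub_apply]
        ring
      exact h3.abs
    have hstep : dW1R ξ₁ ξ₂ ≤ ∫ x, (|cdfR μ x - cdfR ξ₁ x| + |cdfR μ x - cdfR ξ₂ x|) := by
      show (∫ x, |cdfR ξ₁ x - cdfR ξ₂ x|) ≤ _
      refine integral_mono h12 (h1.abs.add h2.abs) fun x => ?_
      calc |cdfR ξ₁ x - cdfR ξ₂ x|
          ≤ |cdfR ξ₁ x - cdfR μ x| + |cdfR μ x - cdfR ξ₂ x| := abs_sub_le _ _ _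
        _ = |cdfR μ x - cdfR ξ₁ x| + |cdfR μ x - cdfR ξ₂ x| := by rw [abs_sub_comm]
    calc dW1R ξ₁ ξ₂ ≤ ∫ x, (|cdfR μ x - cdfR ξ₁ x| + |cdfR μ x - cdfR ξ₂ x|) := hstep
      _ = (∫ x, |cdfR μ x - cdfR ξ₁ x|) + ∫ x, |cdfR μ x - cdfR ξ₂ x| :=
          integral_add h1.abs h2.abs
      _ = dW1R μ ξ₁ + dW1R μ ξ₂ := rfl
      _ = d / 2 + d / 2 := by rw [hm1, hm2, hd]
      _ = d := by ring
  have hbdd : BddAbove S := ⟨d, hub⟩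
  refine ⟨sSup S, isLUB_csSup hSne hbdd, ?_, csSup_le hSne hub⟩
  exact le_trans hge (le_csSup hbdd hmemS)


end
end
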